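/- arXiv:1901.09527 — 11 statements merged into one kernel-verified Lean document; each statement's English description precedes it below -/
import Mathlib

section
/- Every finite bipartite graph G = (X ⊔ Y, E) admits partitions X = X_S ⊔ X_L and Y = Y_S ⊔ Y_L satisfying the following three conditions: (a) there are no edges between X_S and Y_L; (b) the induced subgraph G[X_S, Y_S] is Y-path-saturated; (c) the induced subgraph G[X_L, Y_L] admits a matching saturating every vertex of X_L. -/
attribute [local instance] Classical.propDecidable

variable {V : Type*}

/-- `X, Y` form a bipartition of the vertex set of the simple graph `G`:
they are disjoint, cover all vertices, and every edge joins `X` to `Y`. -/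
def IsBipartition [Fintype V] (G : SimpleGraph V) (X Y : Finset V) : Prop :=
  Disjoint X Y ∧ X ∪ Y = Finset.univ ∧
    ∀ ⦃u v : V⦄, G.Adj u v → (u ∈ X ∧ v ∈ Y) ∨ (u ∈ Y ∧ v ∈ X)

/-- `M` is a matching of `G` all of whose edges go from `X'` to `Y'`
(i.e. a matching of the induced subgraph `G[X', Y']`), recorded as a set of
pairwise vertex-disjoint adjacent pairs. -/
def IsBipMatching (G : SimpleGraph V) (X' Y' : Finset V) (M : Finset (V × V)) : Prop :=
  (∀ p ∈ M, p.1 ∈ X' ∧ p.2 ∈ Y' ∧ G.Adj p.1 p.2) ∧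
  ∀ p ∈ M, ∀ q ∈ M, p ≠ q → p.1 ≠ q.1 ∧ p.2 ≠ q.2

/-- `M` is envy-free w.r.t. `X`: no unmatched vertex of `X` is adjacent to a
matched vertex on the `Y`-side of `M`. -/
def EnvyFree (G : SimpleGraph V) (X : Finset V) (M : Finset (V × V)) : Prop :=
  ∀ x ∈ X, x ∉ M.image Prod.fst → ∀ y ∈ M.image Prod.snd, ¬ G.Adj x y

/-- The (bipartite) graph `G[X ∪ Y]` is `Y`-path-saturated: for some `k ≥ 1` there are
partitions `X = X_0 ⊔ ⋯ ⊔ X_k` and `Y = Y_1 ⊔ ⋯ ⊔ Y_k` such that for `1 ≤ i ≤ k`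
there is a perfect matching between `X_i` and `Y_i`, and every vertex of `Y_i` is
adjacent to some vertex of `X_{i-1}`. -/
def YPathSaturated (G : SimpleGraph V) (X Y : Finset V) : Prop :=
  ∃ k : ℕ, 1 ≤ k ∧ ∃ A B : ℕ → Finset V,
    (∀ i ∈ Finset.range (k + 1), ∀ j ∈ Finset.range (k + 1), i ≠ j → Disjoint (A i) (A j)) ∧
    (∀ i ∈ Finset.Icc 1 k, ∀ j ∈ Finset.Icc 1 k, i ≠ j → Disjoint (B i) (B j)) ∧
    X = (Finset.range (k + 1)).biUnion A ∧
    Y = (Finset.Icc 1 k).biUnion B ∧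
    (∀ i ∈ Finset.Icc 1 k, ∃ f : V → V,
      Set.BijOn f (A i) (B i) ∧ ∀ x ∈ A i, G.Adj x (f x)) ∧
    (∀ i ∈ Finset.Icc 1 k, ∀ y ∈ B i, ∃ x ∈ A (i - 1), G.Adj x y)

/-! ### Auxiliary material for the proof -/

open Finset

/-- The neighbours, inside `Y`, of the set `S`. -/
noncomputable def NbrY (G : SimpleGraph V) (Y S : Finset V) : Finset V :=
  Y.filter (fun y => ∃ x ∈ S, G.Adj x y)

lemma mem_NbrY {G : SimpleGraph V} {Y S : Finset V} {y : V} :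
    y ∈ NbrY G Y S ↔ y ∈ Y ∧ ∃ x ∈ S, G.Adj x y := Finset.mem_filter

lemma NbrY_mono (G : SimpleGraph V) (Y : Finset V) {S T : Finset V} (h : S ⊆ T) :
    NbrY G Y S ⊆ NbrY G Y T := by
  intro y hy
  rw [mem_NbrY] at hy ⊢
  obtain ⟨hyY, x, hxS, hadj⟩ := hy
  exact ⟨hyY, x, h hxS, hadj⟩

lemma NbrY_empty (G : SimpleGraph V) (Y : Finset V) : NbrY G Y ∅ = ∅ := by
  ext y; simp [mem_NbrY]

lemma NbrY_subset (G : SimpleGraph V) (Y S : Finset V) : NbrY G Y S ⊆ Y :=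
  Finset.filter_subset _ _

lemma Icc_one_succ (n : ℕ) : Finset.Icc 1 (n + 1) = insert (n + 1) (Finset.Icc 1 n) := by
  ext m; simp only [Finset.mem_Icc, Finset.mem_insert]; omega

lemma ypath_empty (G : SimpleGraph V) : YPathSaturated G ∅ ∅ := by
  refine ⟨1, le_refl 1, fun _ => ∅, fun _ => ∅, ?_, ?_, ?_, ?_, ?_, ?_⟩
  · intro i _ j _ _; simp
  · intro i _ j _ _; simp
  · ext v; simp
  · ext v; simp
  · intro i _; exact ⟨id, by simp, by simp⟩
  · intro i _ y hy; simp at hy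

/-- Union of two `Y`-path-saturated structures on disjoint vertex sets. -/
lemma ypath_union {G : SimpleGraph V} {X1 Y1 X2 Y2 : Finset V}
    (h1 : YPathSaturated G X1 Y1) (h2 : YPathSaturated G X2 Y2)
    (hX : Disjoint X1 X2) (hY : Disjoint Y1 Y2) :
    YPathSaturated G (X1 ∪ X2) (Y1 ∪ Y2) := by
  obtain ⟨k1, hk1, A1, B1, hA1d, hB1d, hX1, hY1, hM1, hN1⟩ := h1
  obtain ⟨k2, hk2, A2, B2, hA2d, hB2d, hX2, hY2, hM2, hN2⟩ := h2
  classical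
  set k := max k1 k2 with hk
  set A1' : ℕ → Finset V := fun i => if i ≤ k1 then A1 i else ∅ with hA1'
  set A2' : ℕ → Finset V := fun i => if i ≤ k2 then A2 i else ∅ with hA2'
  set B1' : ℕ → Finset V := fun i => if 1 ≤ i ∧ i ≤ k1 then B1 i else ∅ with hB1'
  set B2' : ℕ → Finset V := fun i => if 1 ≤ i ∧ i ≤ k2 then B2 i else ∅ with hB2'
  have hA1sub : ∀ i, A1' i ⊆ X1 := by
    intro i
    simp only [hA1']
    split
    · rename_i h
      rw [hX1]
      intro x hx
      exact Finset.mem_biUnion.2 ⟨i, Finset.mem_range.2 (by omega), hx⟩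
    · exact Finset.empty_subset _
  have hA2sub : ∀ i, A2' i ⊆ X2 := by
    intro i
    simp only [hA2']
    split
    · rename_i h
      rw [hX2]
      intro x hx
      exact Finset.mem_biUnion.2 ⟨i, Finset.mem_range.2 (by omega), hx⟩
    · exact Finset.empty_subset _
  have hB1sub : ∀ i, B1' i ⊆ Y1 := by
    intro i
    simp only [hB1']
    split
    · rename_i h
      rw [hY1]
      intro y hy
      exact Finset.mem_biUnion.2 ⟨i, Finset.mem_Icc.2 ⟨h.1, h.2⟩, hy⟩
    · exact Finset.empty_subset _
  have hB2sub : ∀ i, B2' i ⊆ Y2 := by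
    intro i
    simp only [hB2']
    split
    · rename_i h
      rw [hY2]
      intro y hy
      exact Finset.mem_biUnion.2 ⟨i, Finset.mem_Icc.2 ⟨h.1, h.2⟩, hy⟩
    · exact Finset.empty_subset _
  have hA1'd : ∀ i j, i ≠ j → Disjoint (A1' i) (A1' j) := by
    intro i j hij
    simp only [hA1']
    split <;> split
    · rename_i hi hj
      exact hA1d i (Finset.mem_range.2 (by omega)) j (Finset.mem_range.2 (by omega)) hij
    all_goals simp
  have hA2'd : ∀ i j, i ≠ j → Disjoint (A2' i) (A2' j) := by
    intro i j hij
    simp only [hA2']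
    split <;> split
    · rename_i hi hj
      exact hA2d i (Finset.mem_range.2 (by omega)) j (Finset.mem_range.2 (by omega)) hij
    all_goals simp
  have hB1'd : ∀ i j, i ≠ j → Disjoint (B1' i) (B1' j) := by
    intro i j hij
    simp only [hB1']
    split <;> split
    · rename_i hi hj
      exact hB1d i (Finset.mem_Icc.2 ⟨hi.1, hi.2⟩) j (Finset.mem_Icc.2 ⟨hj.1, hj.2⟩) hij
    all_goals simp
  have hB2'd : ∀ i j, i ≠ j → Disjoint (B2' i) (B2' j) := by
    intro i j hij
    simp only [hB2']
    split <;> split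
    · rename_i hi hj
      exact hB2d i (Finset.mem_Icc.2 ⟨hi.1, hi.2⟩) j (Finset.mem_Icc.2 ⟨hj.1, hj.2⟩) hij
    all_goals simp
  refine ⟨k, le_trans hk1 (le_max_left _ _), fun i => A1' i ∪ A2' i, fun i => B1' i ∪ B2' i,
    ?_, ?_, ?_, ?_, ?_, ?_⟩
  · intro i _ j _ hij
    refine Finset.disjoint_union_left.2 ⟨?_, ?_⟩ <;> refine Finset.disjoint_union_right.2 ⟨?_, ?_⟩
    · exact hA1'd i j hij
    · exact Finset.disjoint_of_subset_left (hA1sub i) (Finset.disjoint_of_subset_right (hA2sub j) hX)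
    · exact Finset.disjoint_of_subset_left (hA2sub i)
        (Finset.disjoint_of_subset_right (hA1sub j) hX.symm)
    · exact hA2'd i j hij
  · intro i _ j _ hij
    refine Finset.disjoint_union_left.2 ⟨?_, ?_⟩ <;> refine Finset.disjoint_union_right.2 ⟨?_, ?_⟩
    · exact hB1'd i j hij
    · exact Finset.disjoint_of_subset_left (hB1sub i) (Finset.disjoint_of_subset_right (hB2sub j) hY)
    · exact Finset.disjoint_of_subset_left (hB2sub i)
        (Finset.disjoint_of_subset_right (hB1sub j) hY.symm)
    · exact hB2'd i j hij
  · -- X1 ∪ X2 = biUnion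
    ext x
    simp only [Finset.mem_union, Finset.mem_biUnion, Finset.mem_range]
    constructor
    · rintro (hx | hx)
      · rw [hX1] at hx
        obtain ⟨i, hi, hxi⟩ := Finset.mem_biUnion.1 hx
        rw [Finset.mem_range] at hi
        refine ⟨i, by omega, Or.inl ?_⟩
        simp only [hA1', if_pos (by omega : i ≤ k1)]
        exact hxi
      · rw [hX2] at hx
        obtain ⟨i, hi, hxi⟩ := Finset.mem_biUnion.1 hx
        rw [Finset.mem_range] at hi
        refine ⟨i, by omega, Or.inr ?_⟩
        simp only [hA2', if_pos (by omega : i ≤ k2)]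
        exact hxi
    · rintro ⟨i, _, hx | hx⟩
      · exact Or.inl (hA1sub i hx)
      · exact Or.inr (hA2sub i hx)
  · -- Y1 ∪ Y2 = biUnion
    ext y
    simp only [Finset.mem_union, Finset.mem_biUnion, Finset.mem_Icc]
    constructor
    · rintro (hy | hy)
      · rw [hY1] at hy
        obtain ⟨i, hi, hyi⟩ := Finset.mem_biUnion.1 hy
        rw [Finset.mem_Icc] at hi
        refine ⟨i, ⟨hi.1, by omega⟩, Or.inl ?_⟩
        simp only [hB1', if_pos (And.intro hi.1 hi.2)]
        exact hyi
      · rw [hY2] at hy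
        obtain ⟨i, hi, hyi⟩ := Finset.mem_biUnion.1 hy
        rw [Finset.mem_Icc] at hi
        refine ⟨i, ⟨hi.1, by omega⟩, Or.inr ?_⟩
        simp only [hB2', if_pos (And.intro hi.1 hi.2)]
        exact hyi
    · rintro ⟨i, _, hy | hy⟩
      · exact Or.inl (hB1sub i hy)
      · exact Or.inr (hB2sub i hy)
  · -- perfect matchings
    intro i hi
    rw [Finset.mem_Icc] at hi
    have hbij1 : ∃ g : V → V, Set.BijOn g ↑(A1' i) ↑(B1' i) ∧ ∀ x ∈ A1' i, G.Adj x (g x) := by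
      by_cases h : i ≤ k1
      · obtain ⟨g, hg, hg'⟩ := hM1 i (Finset.mem_Icc.2 ⟨hi.1, h⟩)
        refine ⟨g, ?_, ?_⟩
        · simpa only [hA1', hB1', if_pos h, if_pos (And.intro hi.1 h)] using hg
        · simpa only [hA1', if_pos h] using hg'
      · refine ⟨id, ?_, ?_⟩
        · simp only [hA1', hB1', if_neg h, if_neg (fun hc : 1 ≤ i ∧ i ≤ k1 => h hc.2)]
          simp
        · simp only [hA1', if_neg h]
          simp
    have hbij2 : ∃ g : V → V, Set.BijOn g ↑(A2' i) ↑(B2' i) ∧ ∀ x ∈ A2' i, G.Adj x (g x) := by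
      by_cases h : i ≤ k2
      · obtain ⟨g, hg, hg'⟩ := hM2 i (Finset.mem_Icc.2 ⟨hi.1, h⟩)
        refine ⟨g, ?_, ?_⟩
        · simpa only [hA2', hB2', if_pos h, if_pos (And.intro hi.1 h)] using hg
        · simpa only [hA2', if_pos h] using hg'
      · refine ⟨id, ?_, ?_⟩
        · simp only [hA2', hB2', if_neg h, if_neg (fun hc : 1 ≤ i ∧ i ≤ k2 => h hc.2)]
          simp
        · simp only [hA2', if_neg h]
          simp
    obtain ⟨g1, hg1, hg1'⟩ := hbij1
    obtain ⟨g2, hg2, hg2'⟩ := hbij2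
    set F : V → V := fun v => if v ∈ A1' i then g1 v else g2 v with hF
    have hdisA : Disjoint (A1' i) (A2' i) :=
      Finset.disjoint_of_subset_left (hA1sub i) (Finset.disjoint_of_subset_right (hA2sub i) hX)
    have hdisB : Disjoint (B1' i) (B2' i) :=
      Finset.disjoint_of_subset_left (hB1sub i) (Finset.disjoint_of_subset_right (hB2sub i) hY)
    have hFeq1 : ∀ x ∈ A1' i, F x = g1 x := fun x hx => by simp only [hF, if_pos hx]
    have hFeq2 : ∀ x ∈ A2' i, F x = g2 x := fun x hx => by
      simp only [hF, if_neg (Finset.disjoint_right.1 hdisA hx)]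
    refine ⟨F, ?_, ?_⟩
    · rw [Finset.coe_union, Finset.coe_union]
      have hb1 : Set.BijOn F ↑(A1' i) ↑(B1' i) :=
        Set.BijOn.congr hg1 (fun x hx => (hFeq1 x hx).symm)
      have hb2 : Set.BijOn F ↑(A2' i) ↑(B2' i) :=
        Set.BijOn.congr hg2 (fun x hx => (hFeq2 x hx).symm)
      refine Set.BijOn.union hb1 hb2 ?_
      intro a ha b hb hab
      rcases ha with ha | ha <;> rcases hb with hb | hb
      · exact hb1.injOn ha hb hab
      · exfalso
        have h1 : F a ∈ B1' i := hb1.mapsTo ha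
        have h2 : F b ∈ B2' i := hb2.mapsTo hb
        rw [hab] at h1
        exact Finset.disjoint_left.1 hdisB h1 h2
      · exfalso
        have h1 : F a ∈ B2' i := hb2.mapsTo ha
        have h2 : F b ∈ B1' i := hb1.mapsTo hb
        rw [hab] at h1
        exact Finset.disjoint_left.1 hdisB h2 h1
      · exact hb2.injOn ha hb hab
    · intro x hx
      rcases Finset.mem_union.1 hx with hx | hx
      · rw [hFeq1 x hx]; exact hg1' x hx
      · rw [hFeq2 x hx]; exact hg2' x hx
  · -- backward adjacency
    intro i hi y hy
    rw [Finset.mem_Icc] at hi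
    rcases Finset.mem_union.1 hy with hy | hy
    · have h : 1 ≤ i ∧ i ≤ k1 := by
        by_contra hc
        simp only [hB1', if_neg hc] at hy
        exact absurd hy (Finset.notMem_empty y)
      have hy' : y ∈ B1 i := by simpa only [hB1', if_pos h] using hy
      obtain ⟨x, hx, hadj⟩ := hN1 i (Finset.mem_Icc.2 h) y hy'
      refine ⟨x, Finset.mem_union.2 (Or.inl ?_), hadj⟩
      simp only [hA1', if_pos (by omega : i - 1 ≤ k1)]
      exact hx
    · have h : 1 ≤ i ∧ i ≤ k2 := by
        by_contra hc
        simp only [hB2', if_neg hc] at hy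
        exact absurd hy (Finset.notMem_empty y)
      have hy' : y ∈ B2 i := by simpa only [hB2', if_pos h] using hy
      obtain ⟨x, hx, hadj⟩ := hN2 i (Finset.mem_Icc.2 h) y hy'
      refine ⟨x, Finset.mem_union.2 (Or.inr ?_), hadj⟩
      simp only [hA2', if_pos (by omega : i - 1 ≤ k2)]
      exact hx

set_option maxHeartbeats 1600000 in
/-- A minimal Hall violator carries a `Y`-path-saturated structure onto its
neighbourhood. -/
lemma violator_saturated (G : SimpleGraph V) (Y S : Finset V)
    (hviol : (NbrY G Y S).card < S.card)
    (hmin : ∀ T ⊆ S, T.card < S.card → T.card ≤ (NbrY G Y T).card) :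
    YPathSaturated G S (NbrY G Y S) := by
  classical
  have hSne : S.Nonempty := Finset.card_pos.1 (by omega)
  obtain ⟨x₀, hx₀⟩ := hSne
  haveI : Nonempty V := ⟨x₀⟩
  -- Hall's condition holds for `S.erase x₀`.
  have hall : ∀ s : Finset {x // x ∈ S.erase x₀},
      s.card ≤ (s.biUnion fun x => Y.filter (G.Adj x.1)).card := by
    intro s
    have himg : s.biUnion (fun x => Y.filter (G.Adj x.1)) = NbrY G Y (s.image Subtype.val) := by
      ext y
      simp only [Finset.mem_biUnion, Finset.mem_filter, mem_NbrY, Finset.mem_image]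
      constructor
      · rintro ⟨x, hxs, hyY, hadj⟩
        exact ⟨hyY, x.1, ⟨x, hxs, rfl⟩, hadj⟩
      · rintro ⟨hyY, x, ⟨a, has, rfl⟩, hadj⟩
        exact ⟨a, has, hyY, hadj⟩
    have hsub : s.image Subtype.val ⊆ S := by
      intro x hx
      obtain ⟨a, _, rfl⟩ := Finset.mem_image.1 hx
      exact Finset.mem_of_mem_erase a.2
    have hcards : (s.image Subtype.val).card = s.card :=
      Finset.card_image_of_injective s Subtype.val_injective
    have hlt : (s.image Subtype.val).card < S.card := by
      calc (s.image Subtype.val).card ≤ (S.erase x₀).card := by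
            apply Finset.card_le_card
            intro x hx
            obtain ⟨a, _, rfl⟩ := Finset.mem_image.1 hx
            exact a.2
        _ < S.card := Finset.card_erase_lt_of_mem hx₀
    rw [himg, ← hcards]
    exact hmin _ hsub hlt
  obtain ⟨f, hfinj, hf⟩ := (Finset.all_card_le_biUnion_card_iff_exists_injective _).1 hall
  have hfY : ∀ x, f x ∈ Y ∧ G.Adj x.1 (f x) := fun x => Finset.mem_filter.1 (hf x)
  set gg : V → V := fun v => if h : v ∈ S.erase x₀ then f ⟨v, h⟩ else v with hgg
  have hggY : ∀ x ∈ S.erase x₀, gg x ∈ NbrY G Y S := by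
    intro x hx
    simp only [hgg, dif_pos hx]
    exact mem_NbrY.2 ⟨(hfY ⟨x, hx⟩).1, x, Finset.mem_of_mem_erase hx, (hfY ⟨x, hx⟩).2⟩
  have hggadj : ∀ x ∈ S.erase x₀, G.Adj x (gg x) := by
    intro x hx
    simp only [hgg, dif_pos hx]
    exact (hfY ⟨x, hx⟩).2
  have hgginj : Set.InjOn gg ↑(S.erase x₀) := by
    intro a ha b hb hab
    rw [Finset.mem_coe] at ha hb
    simp only [hgg, dif_pos ha, dif_pos hb] at hab
    exact congrArg Subtype.val (hfinj hab)
  have himg : (S.erase x₀).image gg = NbrY G Y S := by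
    apply Finset.eq_of_subset_of_card_le
    · intro y hy
      obtain ⟨x, hx, rfl⟩ := Finset.mem_image.1 hy
      exact hggY x hx
    · rw [Finset.card_image_of_injOn hgginj, Finset.card_erase_of_mem hx₀]
      omega
  set pinv : V → V := Function.invFunOn gg ↑(S.erase x₀) with hpinv
  have hexists : ∀ y ∈ NbrY G Y S, ∃ a ∈ (↑(S.erase x₀) : Set V), gg a = y := by
    intro y hy
    rw [← himg] at hy
    obtain ⟨x, hx, rfl⟩ := Finset.mem_image.1 hy
    exact ⟨x, hx, rfl⟩
  have hpinv_mem : ∀ y ∈ NbrY G Y S, pinv y ∈ S.erase x₀ := fun y hy =>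
    Function.invFunOn_mem (hexists y hy)
  have hpinv_gg : ∀ y ∈ NbrY G Y S, gg (pinv y) = y := fun y hy =>
    Function.invFunOn_eq (hexists y hy)
  have hpinv_inj : ∀ y₁ ∈ NbrY G Y S, ∀ y₂ ∈ NbrY G Y S, pinv y₁ = pinv y₂ → y₁ = y₂ := by
    intro y₁ h₁ y₂ h₂ h
    rw [← hpinv_gg y₁ h₁, ← hpinv_gg y₂ h₂, h]
  -- BFS iteration from `x₀`.
  set Fc : Finset V → Finset V := fun t => insert x₀ ((NbrY G Y t).image pinv) with hFc
  set C : ℕ → Finset V := fun n => Fc^[n] {x₀} with hCdef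
  have hC0 : C 0 = {x₀} := rfl
  have hCsucc' : ∀ n, C (n + 1) = Fc (C n) := by
    intro n; simp only [hCdef]; exact Function.iterate_succ_apply' Fc n {x₀}
  have hCS : ∀ n, C n ⊆ S := by
    intro n
    induction n with
    | zero => rw [hC0]; exact Finset.singleton_subset_iff.2 hx₀
    | succ m ih =>
      rw [hCsucc' m]
      intro v hv
      rcases Finset.mem_insert.1 hv with rfl | hv
      · exact hx₀
      · obtain ⟨y, hy, rfl⟩ := Finset.mem_image.1 hv
        exact Finset.mem_of_mem_erase (hpinv_mem y (NbrY_mono G Y ih hy))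
  have hFcmono : ∀ ⦃t t' : Finset V⦄, t ⊆ t' → Fc t ⊆ Fc t' := by
    intro t t' h
    exact Finset.insert_subset_insert _ (Finset.image_subset_image (NbrY_mono G Y h))
  have hCle : ∀ n, C n ⊆ C (n + 1) := by
    intro n
    induction n with
    | zero =>
      rw [hCsucc' 0, hC0]
      exact Finset.singleton_subset_iff.2 (Finset.mem_insert_self _ _)
    | succ m ih =>
      rw [hCsucc' m, hCsucc' (m + 1)]
      exact hFcmono ih
  have hCmono : Monotone C := monotone_nat_of_le_succ hCle
  have hx₀C : ∀ n, x₀ ∈ C n := by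
    intro n
    cases n with
    | zero => rw [hC0]; exact Finset.mem_singleton_self x₀
    | succ m => rw [hCsucc' m]; exact Finset.mem_insert_self _ _
  set CA : ℕ → Finset V := fun n => if n = 0 then ∅ else C (n - 1) with hCA
  set Dp : ℕ → Finset V := fun n => NbrY G Y (CA n) with hDp
  have hCA0 : CA 0 = ∅ := by simp [hCA]
  have hCAsucc : ∀ n, CA (n + 1) = C n := by intro n; simp [hCA]
  have hDp0 : Dp 0 = ∅ := by simp only [hDp]; rw [hCA0, NbrY_empty]
  have hCAmono : Monotone CA := by
    intro m n hmn
    rcases Nat.eq_zero_or_pos m with rfl | hm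
    · rw [hCA0]; exact Finset.empty_subset _
    · obtain ⟨m', rfl⟩ := Nat.exists_eq_succ_of_ne_zero (by omega : m ≠ 0)
      obtain ⟨n', rfl⟩ := Nat.exists_eq_succ_of_ne_zero (by omega : n ≠ 0)
      rw [hCAsucc, hCAsucc]
      exact hCmono (by omega)
  have hDpmono : Monotone Dp := by
    intro m n h
    simp only [hDp]
    exact NbrY_mono G Y (hCAmono h)
  have hCAS : ∀ n, CA n ⊆ S := by
    intro n
    cases n with
    | zero => rw [hCA0]; exact Finset.empty_subset _
    | succ m => rw [hCAsucc]; exact hCS m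
  have hDpsub : ∀ n, Dp n ⊆ NbrY G Y S := by
    intro n
    simp only [hDp]
    exact NbrY_mono G Y (hCAS n)
  have hCeq : ∀ n, C n = insert x₀ ((Dp n).image pinv) := by
    intro n
    cases n with
    | zero => rw [hC0, hDp0]; simp
    | succ m =>
      rw [hCsucc' m]
      have : Dp (m + 1) = NbrY G Y (C m) := by
        simp only [hDp]; rw [hCAsucc]
      rw [this]
  have hstab : ∀ m, C m = C (m + 1) → ∀ j, m ≤ j → C j = C m := by
    intro m hm j hj
    induction j, hj using Nat.le_induction with
    | base => rfl
    | succ j hj ih =>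
      rw [hCsucc' j, ih, ← hCsucc' m]
      exact hm.symm
  have hgrow : ∀ n, (∃ m ≤ n, C m = C (m + 1)) ∨ n + 2 ≤ (C (n + 1)).card := by
    intro n
    induction n with
    | zero =>
      by_cases h : C 0 = C 1
      · exact Or.inl ⟨0, le_refl 0, h⟩
      · right
        have hE : C (0 + 1) = C 1 := rfl
        have h2 : (C 0).card < (C 1).card :=
          Finset.card_lt_card (Finset.ssubset_iff_subset_ne.2 ⟨hE ▸ hCle 0, h⟩)
        have h3 : (C 0).card = 1 := by rw [hC0]; exact Finset.card_singleton x₀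
        rw [hE]
        omega
    | succ m ih =>
      rcases ih with ⟨m', hm', heq⟩ | hcard
      · exact Or.inl ⟨m', by omega, heq⟩
      · by_cases h : C (m + 1) = C (m + 2)
        · exact Or.inl ⟨m + 1, le_refl _, h⟩
        · right
          have hE : C (m + 1 + 1) = C (m + 2) := rfl
          have h2 : (C (m + 1)).card < (C (m + 2)).card :=
            Finset.card_lt_card (Finset.ssubset_iff_subset_ne.2 ⟨hE ▸ hCle (m + 1), h⟩)
          rw [hE]
          omega
  have hk1 : 1 ≤ S.card := Finset.card_pos.2 ⟨x₀, hx₀⟩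
  obtain ⟨k', hkk'⟩ : ∃ k', S.card = k' + 1 := ⟨S.card - 1, by omega⟩
  have hstable : ∃ m ≤ k', C m = C (m + 1) := by
    rcases hgrow k' with h | h
    · exact h
    · exfalso
      have := Finset.card_le_card (hCS (k' + 1))
      omega
  obtain ⟨m, hmk, hmeq⟩ := hstable
  have hconst : ∀ j, m ≤ j → C j = C m := hstab m hmeq
  have hCk'k : C k' = C S.card := by
    rw [hconst k' hmk, hconst S.card (by omega)]
  have hCkk1 : C (S.card + 1) = C S.card := by
    rw [hconst (S.card + 1) (by omega), hconst S.card (by omega)]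
  have hCkS : C S.card = S := by
    by_contra hne
    have hsub := hCS S.card
    have hlt : (C S.card).card < S.card :=
      Finset.card_lt_card (Finset.ssubset_iff_subset_ne.2 ⟨hsub, hne⟩)
    have hDpk : Dp (S.card + 1) = NbrY G Y (C S.card) := by
      simp only [hDp]; rw [hCAsucc]
    have h1 : (NbrY G Y (C S.card)).image pinv ⊆ C S.card := by
      have h2 := hCeq (S.card + 1)
      rw [hCkk1, hDpk] at h2
      have h3 := Finset.subset_insert x₀ ((NbrY G Y (C S.card)).image pinv)
      rw [← h2] at h3
      exact h3
    have hinj : Set.InjOn pinv ↑(NbrY G Y (C S.card)) := by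
      intro y₁ h₁ y₂ h₂ h
      rw [Finset.mem_coe] at h₁ h₂
      exact hpinv_inj y₁ (NbrY_mono G Y hsub h₁) y₂ (NbrY_mono G Y hsub h₂) h
    have h3 : (NbrY G Y (C S.card)).image pinv ⊆ (C S.card).erase x₀ := by
      intro v hv
      obtain ⟨y, hy, rfl⟩ := Finset.mem_image.1 hv
      refine Finset.mem_erase.2 ⟨?_, h1 (Finset.mem_image_of_mem pinv hy)⟩
      have := hpinv_mem y (NbrY_mono G Y hsub hy)
      exact Finset.ne_of_mem_erase this
    have h4 : (NbrY G Y (C S.card)).card ≤ (C S.card).card - 1 := by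
      have h5 := Finset.card_le_card h3
      rw [Finset.card_image_of_injOn hinj, Finset.card_erase_of_mem (hx₀C S.card)] at h5
      exact h5
    have hle := hmin (C S.card) hsub hlt
    have hpos : 1 ≤ (C S.card).card := Finset.card_pos.2 ⟨x₀, hx₀C S.card⟩
    omega
  -- assemble the structure
  set A : ℕ → Finset V := fun n => CA (n + 1) \ CA n with hA
  set B : ℕ → Finset V := fun n => Dp n \ Dp (n - 1) with hB
  have hAdis : ∀ i j, i < j → Disjoint (A i) (A j) := by
    intro i j hij
    rw [Finset.disjoint_left]
    intro v hvi hvj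
    simp only [hA, Finset.mem_sdiff] at hvi hvj
    exact hvj.2 (hCAmono (by omega : i + 1 ≤ j) hvi.1)
  have hBdis : ∀ i j, i < j → Disjoint (B i) (B j) := by
    intro i j hij
    rw [Finset.disjoint_left]
    intro v hvi hvj
    simp only [hB, Finset.mem_sdiff] at hvi hvj
    exact hvj.2 (hDpmono (by omega : i ≤ j - 1) hvi.1)
  have hAun : ∀ n, (Finset.range (n + 1)).biUnion A = CA (n + 1) := by
    intro n
    induction n with
    | zero =>
      rw [Finset.range_one, Finset.singleton_biUnion]
      simp only [hA]
      rw [hCA0, Finset.sdiff_empty]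
    | succ m ih =>
      rw [Finset.range_add_one, Finset.biUnion_insert, ih]
      simp only [hA]
      exact Finset.sdiff_union_of_subset (hCAmono (by omega))
  have hBun : ∀ n, (Finset.Icc 1 n).biUnion B = Dp n := by
    intro n
    induction n with
    | zero =>
      rw [hDp0]
      simp
    | succ m ih =>
      rw [Icc_one_succ, Finset.biUnion_insert, ih]
      simp only [hB]
      have hm1 : m + 1 - 1 = m := rfl
      rw [hm1]
      exact Finset.sdiff_union_of_subset (hDpmono (by omega))
  refine ⟨S.card, hk1, A, B, ?_, ?_, ?_, ?_, ?_, ?_⟩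
  · intro i _ j _ hij
    rcases lt_or_gt_of_ne hij with h | h
    · exact hAdis i j h
    · exact (hAdis j i h).symm
  · intro i _ j _ hij
    rcases lt_or_gt_of_ne hij with h | h
    · exact hBdis i j h
    · exact (hBdis j i h).symm
  · rw [hAun S.card, hCAsucc, hCkS]
  · rw [hBun S.card]
    have : Dp S.card = NbrY G Y S := by
      simp only [hDp]
      rw [hkk', hCAsucc, hCk'k, hCkS]
    rw [this]
  · -- the perfect matchings
    intro i hi
    rw [Finset.mem_Icc] at hi
    have hCAi1 : CA (i + 1) = insert x₀ ((Dp i).image pinv) := by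
      rw [hCAsucc]
      exact hCeq i
    have hCAi : CA i = insert x₀ ((Dp (i - 1)).image pinv) := by
      obtain ⟨i', rfl⟩ : ∃ i', i = i' + 1 := ⟨i - 1, by omega⟩
      rw [hCAsucc]
      simpa using hCeq i'
    have hDpiS : Dp i ⊆ NbrY G Y S := hDpsub i
    have hDpi1S : Dp (i - 1) ⊆ NbrY G Y S := hDpsub (i - 1)
    have hx₀CA : x₀ ∈ CA i := by rw [hCAi]; exact Finset.mem_insert_self _ _
    have hAsub : ∀ v ∈ A i, v ∈ S.erase x₀ := by
      intro v hv
      simp only [hA, Finset.mem_sdiff] at hv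
      obtain ⟨hv1, hv2⟩ := hv
      rw [hCAi1] at hv1
      rcases Finset.mem_insert.1 hv1 with rfl | hv1
      · exact absurd hx₀CA hv2
      · obtain ⟨y, hy, rfl⟩ := Finset.mem_image.1 hv1
        exact hpinv_mem y (hDpiS hy)
    refine ⟨gg, ⟨?_, ?_, ?_⟩, ?_⟩
    · -- MapsTo
      intro v hv
      rw [Finset.mem_coe] at hv
      have hv' := hv
      simp only [hA, Finset.mem_sdiff] at hv'
      obtain ⟨hv1, hv2⟩ := hv'
      rw [hCAi1] at hv1
      rcases Finset.mem_insert.1 hv1 with rfl | hv1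
      · exact absurd hx₀CA hv2
      · obtain ⟨y, hy, rfl⟩ := Finset.mem_image.1 hv1
        rw [Finset.mem_coe]
        simp only [hB, Finset.mem_sdiff]
        rw [hpinv_gg y (hDpiS hy)]
        refine ⟨hy, fun hyc => hv2 ?_⟩
        rw [hCAi]
        exact Finset.mem_insert_of_mem (Finset.mem_image_of_mem pinv hyc)
    · -- InjOn
      intro a ha b hb hab
      rw [Finset.mem_coe] at ha hb
      exact hgginj (Finset.mem_coe.2 (hAsub a ha)) (Finset.mem_coe.2 (hAsub b hb)) hab
    · -- SurjOn
      intro y hy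
      rw [Finset.mem_coe] at hy
      have hy' := hy
      simp only [hB, Finset.mem_sdiff] at hy'
      obtain ⟨hy1, hy2⟩ := hy'
      have hyS := hDpiS hy1
      refine ⟨pinv y, ?_, hpinv_gg y hyS⟩
      rw [Finset.mem_coe]
      simp only [hA, Finset.mem_sdiff]
      constructor
      · rw [hCAi1]
        exact Finset.mem_insert_of_mem (Finset.mem_image_of_mem pinv hy1)
      · intro hc
        rw [hCAi] at hc
        rcases Finset.mem_insert.1 hc with hcx | hc
        · exact Finset.notMem_erase x₀ S (hcx ▸ hpinv_mem y hyS)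
        · obtain ⟨y', hy'', hyy'⟩ := Finset.mem_image.1 hc
          have hyeq : y' = y := hpinv_inj y' (hDpi1S hy'') y hyS hyy'
          exact hy2 (hyeq ▸ hy'')
    · -- adjacency along the matching
      intro x hx
      exact hggadj x (hAsub x hx)
  · -- backward adjacency
    intro i hiIcc y hy
    rw [Finset.mem_Icc] at hiIcc
    simp only [hB, Finset.mem_sdiff] at hy
    obtain ⟨hy1, hy2⟩ := hy
    have hy1' : y ∈ NbrY G Y (CA i) := by simpa only [hDp] using hy1
    obtain ⟨hyY, x, hx, hadj⟩ := mem_NbrY.1 hy1'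
    refine ⟨x, ?_, hadj⟩
    simp only [hA, Finset.mem_sdiff]
    constructor
    · have hieq : i - 1 + 1 = i := by omega
      rw [hieq]
      exact hx
    · intro hc
      apply hy2
      simp only [hDp]
      exact mem_NbrY.2 ⟨hyY, x, hc, hadj⟩

/-- If Hall's condition holds, there is a matching saturating `X`. -/
lemma hall_case (G : SimpleGraph V) (X Y : Finset V)
    (hall : ∀ T ⊆ X, T.card ≤ (NbrY G Y T).card) :
    ∃ M : Finset (V × V), IsBipMatching G X Y M ∧ X ⊆ M.image Prod.fst := by
  classical
  have h : ∀ s : Finset {x // x ∈ X}, s.card ≤ (s.biUnion fun x => Y.filter (G.Adj x.1)).card := by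
    intro s
    have himg : s.biUnion (fun x => Y.filter (G.Adj x.1)) = NbrY G Y (s.image Subtype.val) := by
      ext y
      simp only [Finset.mem_biUnion, Finset.mem_filter, mem_NbrY, Finset.mem_image]
      constructor
      · rintro ⟨x, hxs, hyY, hadj⟩
        exact ⟨hyY, x.1, ⟨x, hxs, rfl⟩, hadj⟩
      · rintro ⟨hyY, x, ⟨a, has, rfl⟩, hadj⟩
        exact ⟨a, has, hyY, hadj⟩
    have hsub : s.image Subtype.val ⊆ X := by
      intro x hx
      obtain ⟨a, _, rfl⟩ := Finset.mem_image.1 hx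
      exact a.2
    have hcards : (s.image Subtype.val).card = s.card :=
      Finset.card_image_of_injective s Subtype.val_injective
    rw [himg, ← hcards]
    exact hall _ hsub
  obtain ⟨f, hfinj, hf⟩ := (Finset.all_card_le_biUnion_card_iff_exists_injective _).1 h
  refine ⟨X.attach.image (fun x => (x.1, f x)), ⟨?_, ?_⟩, ?_⟩
  · intro p hp
    obtain ⟨a, _, rfl⟩ := Finset.mem_image.1 hp
    have := Finset.mem_filter.1 (hf a)
    exact ⟨a.2, this.1, this.2⟩
  · intro p hp q hq hpq
    obtain ⟨a, _, rfl⟩ := Finset.mem_image.1 hp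
    obtain ⟨b, _, rfl⟩ := Finset.mem_image.1 hq
    have hab : a ≠ b := fun h' => hpq (by rw [h'])
    exact ⟨fun h' => hab (Subtype.ext h'), fun h' => hab (hfinj h')⟩
  · intro x hx
    rw [Finset.mem_image]
    exact ⟨(x, f ⟨x, hx⟩), Finset.mem_image.2 ⟨⟨x, hx⟩, Finset.mem_attach _ _, rfl⟩, rfl⟩

lemma structure_aux (G : SimpleGraph V) :
    ∀ (n : ℕ) (X Y : Finset V), X.card ≤ n →
    ∃ XS XL YS YL : Finset V,
      Disjoint XS XL ∧ XS ∪ XL = X ∧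
      Disjoint YS YL ∧ YS ∪ YL = Y ∧
      (∀ x ∈ XS, ∀ y ∈ YL, ¬ G.Adj x y) ∧
      YPathSaturated G XS YS ∧
      (∃ M : Finset (V × V), IsBipMatching G XL YL M ∧ XL ⊆ M.image Prod.fst) := by
  intro n
  induction n with
  | zero =>
    intro X Y hX
    have hXe : X = ∅ := Finset.card_eq_zero.1 (by omega)
    subst hXe
    have hall : ∀ T ⊆ (∅ : Finset V), T.card ≤ (NbrY G Y T).card := by
      intro T hT
      rw [Finset.subset_empty.1 hT]
      simp
    obtain ⟨M, hM1, hM2⟩ := hall_case G ∅ Y hall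
    exact ⟨∅, ∅, ∅, Y, Finset.disjoint_empty_left _, by simp, Finset.disjoint_empty_left _,
      by simp, fun x hx => absurd hx (Finset.notMem_empty x), ypath_empty G, M, hM1, hM2⟩
  | succ n ih =>
    intro X Y hX
    by_cases hall : ∀ T ⊆ X, T.card ≤ (NbrY G Y T).card
    · obtain ⟨M, hM1, hM2⟩ := hall_case G X Y hall
      exact ⟨∅, X, ∅, Y, Finset.disjoint_empty_left _, by simp, Finset.disjoint_empty_left _,
        by simp, fun x hx => absurd hx (Finset.notMem_empty x), ypath_empty G, M, hM1, hM2⟩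
    · push_neg at hall
      obtain ⟨T₀, hT₀X, hT₀⟩ := hall
      have hne : (X.powerset.filter fun T => (NbrY G Y T).card < T.card).Nonempty :=
        ⟨T₀, Finset.mem_filter.2 ⟨Finset.mem_powerset.2 hT₀X, hT₀⟩⟩
      obtain ⟨S, hSmem, hSmin⟩ := Finset.exists_min_image _ (fun T => T.card) hne
      rw [Finset.mem_filter, Finset.mem_powerset] at hSmem
      obtain ⟨hSX, hSviol⟩ := hSmem
      have hmin : ∀ T ⊆ S, T.card < S.card → T.card ≤ (NbrY G Y T).card := by
        intro T hTS hTcard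
        by_contra hc
        push_neg at hc
        have := hSmin T (Finset.mem_filter.2 ⟨Finset.mem_powerset.2 (hTS.trans hSX), hc⟩)
        omega
      have hpath := violator_saturated G Y S hSviol hmin
      have hSne : S.Nonempty := Finset.card_pos.1 (by omega)
      have hScard : 1 ≤ S.card := Finset.card_pos.2 hSne
      have hcard' : (X \ S).card ≤ n := by
        rw [Finset.card_sdiff_of_subset hSX]
        omega
      obtain ⟨XS', XL, YS', YL, hd1, hu1, hd2, hu2, hnoedge, hpath', M, hM1, hM2⟩ :=
        ih (X \ S) (Y \ NbrY G Y S) hcard'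
      have hXLsub : XL ⊆ X \ S := hu1 ▸ Finset.subset_union_right
      have hXS'sub : XS' ⊆ X \ S := hu1 ▸ Finset.subset_union_left
      have hYLsub : YL ⊆ Y \ NbrY G Y S := hu2 ▸ Finset.subset_union_right
      have hYS'sub : YS' ⊆ Y \ NbrY G Y S := hu2 ▸ Finset.subset_union_left
      have hdisjS : Disjoint S (X \ S) := Finset.disjoint_sdiff
      have hdisjN : Disjoint (NbrY G Y S) (Y \ NbrY G Y S) := Finset.disjoint_sdiff
      refine ⟨S ∪ XS', XL, NbrY G Y S ∪ YS', YL, ?_, ?_, ?_, ?_, ?_, ?_, M, hM1, hM2⟩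
      · exact Finset.disjoint_union_left.2
          ⟨Finset.disjoint_of_subset_right hXLsub hdisjS, hd1⟩
      · rw [Finset.union_assoc, hu1, Finset.union_sdiff_of_subset hSX]
      · exact Finset.disjoint_union_left.2
          ⟨Finset.disjoint_of_subset_right hYLsub hdisjN, hd2⟩
      · rw [Finset.union_assoc, hu2, Finset.union_sdiff_of_subset (NbrY_subset G Y S)]
      · intro x hx y hy hadj
        rcases Finset.mem_union.1 hx with hx | hx
        · have hy' := Finset.mem_sdiff.1 (hYLsub hy)
          exact hy'.2 (mem_NbrY.2 ⟨hy'.1, x, hx, hadj⟩)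
        · exact hnoedge x hx y hy hadj
      · exact ypath_union hpath hpath'
          (Finset.disjoint_of_subset_right hXS'sub hdisjS)
          (Finset.disjoint_of_subset_right hYS'sub hdisjN)

/-- every finite bipartite graph admits partitions `X = X_S ⊔ X_L`,
`Y = Y_S ⊔ Y_L` with (a) no edges between `X_S` and `Y_L`, (b) `G[X_S, Y_S]`
`Y`-path-saturated, and (c) `G[X_L, Y_L]` admitting a matching saturating `X_L`. -/
theorem structure_theorem [Fintype V] (G : SimpleGraph V) (X Y : Finset V)
    (hBip : IsBipartition G X Y) :
    ∃ XS XL YS YL : Finset V,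
      Disjoint XS XL ∧ XS ∪ XL = X ∧
      Disjoint YS YL ∧ YS ∪ YL = Y ∧
      (∀ x ∈ XS, ∀ y ∈ YL, ¬ G.Adj x y) ∧
      YPathSaturated G XS YS ∧
      (∃ M : Finset (V × V), IsBipMatching G XL YL M ∧ XL ⊆ M.image Prod.fst) := by
  exact structure_aux G X.card X Y le_rfl
end

section
/- For a finite bipartite graph G = (X ⊔ Y, E), the partitions X = X_S ⊔ X_L and Y = Y_S ⊔ Y_L satisfying (a) there are no edges between X_S and Y_L, (b) G[X_S, Y_S] is Y-path-saturated, and (c) G[X_L, Y_L] admits a matching saturating X_L, are unique: if (X_S, X_L, Y_S, Y_L) and (X_S', X_L', Y_S', Y_L') both satisfy (a), (b), (c), then X_S = X_S', X_L = X_L', Y_S = Y_S', and Y_L = Y_L'. -/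
attribute [local instance] Classical.propDecidable

variable {V : Type*}

lemma structure_partition_aux [Fintype V] (G : SimpleGraph V) (X Y : Finset V)
    (hBip : IsBipartition G X Y)
    (XS XL YS YL XS' XL' YL' : Finset V)
    (hXunion : XS ∪ XL = X) (hYunion : YS ∪ YL = Y)
    (ha : ∀ x ∈ XS, ∀ y ∈ YL, ¬ G.Adj x y)
    (hb : YPathSaturated G XS YS)
    (hXunion' : XS' ∪ XL' = X)
    (ha' : ∀ x ∈ XS', ∀ y ∈ YL', ¬ G.Adj x y)
    (hc' : ∃ M : Finset (V × V), IsBipMatching G XL' YL' M ∧ XL' ⊆ M.image Prod.fst) :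
    XS ∩ XL' = ∅ ∧ YS ∩ YL' = ∅ := by
  classical
  obtain ⟨M, hM, hMsat⟩ := hc'
  obtain ⟨hM1, hM2⟩ := hM
  obtain ⟨k, hk1, A, B, hAdisj, hBdisj, hXS, hYS, hPM, hDom⟩ := hb
  choose F hF using hPM
  set S : Finset V := XS ∩ XL' with hSdef
  set T : Finset V := YS ∩ YL' with hTdef
  have hXSX : XS ⊆ X := by rw [← hXunion]; exact Finset.subset_union_left
  have hXY : ∀ v ∈ X, v ∉ Y := fun v hv => Finset.disjoint_left.mp hBip.1 hv
  have hAeq : ∀ i₁, i₁ < k + 1 → ∀ i₂, i₂ < k + 1 → ∀ x, x ∈ A i₁ → x ∈ A i₂ → i₁ = i₂ := by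
    intro i₁ h₁ i₂ h₂ x hx₁ hx₂
    by_contra hne
    exact Finset.disjoint_left.mp
      (hAdisj i₁ (Finset.mem_range.mpr h₁) i₂ (Finset.mem_range.mpr h₂) hne) hx₁ hx₂
  have hAsub : ∀ i, i < k + 1 → A i ⊆ XS := by
    intro i hi x hx
    rw [hXS]
    exact Finset.mem_biUnion.mpr ⟨i, Finset.mem_range.mpr hi, hx⟩
  -- the map φ : S → T coming from the matching M
  set φ : V → V := fun x => if h : ∃ p ∈ M, p.1 = x then h.choose.2 else x with hφdef
  have hφspec : ∀ x ∈ S, ∃ p ∈ M, p.1 = x ∧ p.2 = φ x := by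
    intro x hx
    have hx' : x ∈ XL' := (Finset.mem_inter.mp hx).2
    have h : ∃ p ∈ M, p.1 = x := by
      obtain ⟨p, hp, hpe⟩ := Finset.mem_image.mp (hMsat hx')
      exact ⟨p, hp, hpe⟩
    refine ⟨h.choose, h.choose_spec.1, h.choose_spec.2, ?_⟩
    simp only [hφdef]
    rw [dif_pos h]
  have hφmaps : ∀ x ∈ S, φ x ∈ T := by
    intro x hx
    obtain ⟨hx1, hx2⟩ := Finset.mem_inter.mp hx
    obtain ⟨p, hpM, hp1, hp2⟩ := hφspec x hx
    obtain ⟨-, hpY, hpadj⟩ := hM1 p hpM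
    rw [hp1, hp2] at hpadj
    have hφY : φ x ∈ Y := by
      rcases hBip.2.2 hpadj with ⟨h1, h2⟩ | ⟨h1, h2⟩
      · exact h2
      · exact absurd h1 (hXY x (hXSX hx1))
    have hφnYL : φ x ∉ YL := fun hcY => ha x hx1 _ hcY hpadj
    rw [← hYunion] at hφY
    rcases Finset.mem_union.mp hφY with h | h
    · exact Finset.mem_inter.mpr ⟨h, hp2 ▸ hpY⟩
    · exact absurd h hφnYL
  have hφinj : Set.InjOn φ ↑S := by
    intro x₁ hx₁ x₂ hx₂ heq
    by_contra hne
    obtain ⟨p₁, hp₁M, hp₁1, hp₁2⟩ := hφspec x₁ (Finset.mem_coe.mp hx₁)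
    obtain ⟨p₂, hp₂M, hp₂1, hp₂2⟩ := hφspec x₂ (Finset.mem_coe.mp hx₂)
    have hpne : p₁ ≠ p₂ := by
      intro hcon
      apply hne
      rw [← hp₁1, ← hp₂1, hcon]
    have h2ne := (hM2 p₁ hp₁M p₂ hp₂M hpne).2
    apply h2ne
    rw [hp₁2, hp₂2, heq]
  -- the map ψ : T → S coming from the path-saturated structure
  have hψex : ∀ (i : ℕ) (hi : i ∈ Finset.Icc 1 k) (y : V), y ∈ B i →
      ∃ x, x ∈ A i ∧ F i hi x = y := by
    intro i hi y hy
    obtain ⟨x, hxA, hxe⟩ := (hF i hi).1.surjOn (Finset.mem_coe.mpr hy)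
    exact ⟨x, Finset.mem_coe.mp hxA, hxe⟩
  set ψ : V → V := fun y =>
    if h : ∃ i, ∃ hi : i ∈ Finset.Icc 1 k, y ∈ B i then
      (hψex h.choose h.choose_spec.choose y h.choose_spec.choose_spec).choose
    else y with hψdef
  have hψspec : ∀ y ∈ T, ∃ i, ∃ hi : i ∈ Finset.Icc 1 k,
      y ∈ B i ∧ ψ y ∈ A i ∧ F i hi (ψ y) = y := by
    intro y hy
    have hyYS : y ∈ YS := (Finset.mem_inter.mp hy).1
    have h : ∃ i, ∃ hi : i ∈ Finset.Icc 1 k, y ∈ B i := by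
      rw [hYS] at hyYS
      obtain ⟨i, hi, hyB⟩ := Finset.mem_biUnion.mp hyYS
      exact ⟨i, hi, hyB⟩
    refine ⟨h.choose, h.choose_spec.choose, h.choose_spec.choose_spec, ?_, ?_⟩
    · simp only [hψdef]
      rw [dif_pos h]
      exact (hψex h.choose h.choose_spec.choose y h.choose_spec.choose_spec).choose_spec.1
    · simp only [hψdef]
      rw [dif_pos h]
      exact (hψex h.choose h.choose_spec.choose y h.choose_spec.choose_spec).choose_spec.2
  have hψmaps : ∀ y ∈ T, ψ y ∈ S := by
    intro y hy
    obtain ⟨i, hi, hyB, hxA, hFe⟩ := hψspec y hy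
    have hik : i ≤ k := (Finset.mem_Icc.mp hi).2
    have hxXS : ψ y ∈ XS := hAsub i (by omega) hxA
    have hadj : G.Adj (ψ y) y := by
      have h' := (hF i hi).2 (ψ y) hxA
      rwa [hFe] at h'
    have hyYL' : y ∈ YL' := (Finset.mem_inter.mp hy).2
    have hnXS' : ψ y ∉ XS' := fun hcX => ha' _ hcX y hyYL' hadj
    have hX : ψ y ∈ X := hXSX hxXS
    rw [← hXunion'] at hX
    rcases Finset.mem_union.mp hX with h | h
    · exact absurd h hnXS'
    · exact Finset.mem_inter.mpr ⟨hxXS, h⟩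
  have hψinj : Set.InjOn ψ ↑T := by
    intro y₁ hy₁ y₂ hy₂ heq
    obtain ⟨i₁, hi₁, hB₁, hA₁, hF₁⟩ := hψspec y₁ (Finset.mem_coe.mp hy₁)
    obtain ⟨i₂, hi₂, hB₂, hA₂, hF₂⟩ := hψspec y₂ (Finset.mem_coe.mp hy₂)
    have hk₁ : i₁ < k + 1 := by have := (Finset.mem_Icc.mp hi₁).2; omega
    have hk₂ : i₂ < k + 1 := by have := (Finset.mem_Icc.mp hi₂).2; omega
    have hieq : i₁ = i₂ := hAeq i₁ hk₁ i₂ hk₂ (ψ y₁) hA₁ (heq ▸ hA₂)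
    subst hieq
    rw [← hF₁, ← hF₂, heq]
  have hcST : S.card ≤ T.card := Finset.card_le_card_of_injOn φ hφmaps hφinj
  have hcTS : T.card ≤ S.card := Finset.card_le_card_of_injOn ψ hψmaps hψinj
  have himg : T.image ψ = S := by
    apply Finset.eq_of_subset_of_card_le
    · intro x hx
      obtain ⟨y, hy, he⟩ := Finset.mem_image.mp hx
      exact he ▸ hψmaps y hy
    · rw [Finset.card_image_of_injOn hψinj]
      omega
  have hTempty : T = ∅ := by
    by_contra hne
    obtain ⟨y₀, hy₀⟩ := Finset.nonempty_iff_ne_empty.mpr hne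
    set I : Finset ℕ := (Finset.Icc 1 k).filter (fun i => ((B i) ∩ T).Nonempty) with hIdef
    have hIne : I.Nonempty := by
      obtain ⟨i, hi, hyB, -, -⟩ := hψspec y₀ hy₀
      exact ⟨i, Finset.mem_filter.mpr ⟨hi, ⟨y₀, Finset.mem_inter.mpr ⟨hyB, hy₀⟩⟩⟩⟩
    set i₀ := I.min' hIne with hi₀def
    have hi₀I := I.min'_mem hIne
    obtain ⟨hi₀Icc, hBi₀⟩ := Finset.mem_filter.mp hi₀I
    obtain ⟨y, hyBT⟩ := hBi₀
    obtain ⟨hyB, hyT⟩ := Finset.mem_inter.mp hyBT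
    obtain ⟨x, hxA, hadj⟩ := hDom i₀ hi₀Icc y hyB
    have hi₀1 : 1 ≤ i₀ := (Finset.mem_Icc.mp hi₀Icc).1
    have hi₀k : i₀ ≤ k := (Finset.mem_Icc.mp hi₀Icc).2
    have hxXS : x ∈ XS := hAsub (i₀ - 1) (by omega) hxA
    have hyYL' : y ∈ YL' := (Finset.mem_inter.mp hyT).2
    have hxnXS' : x ∉ XS' := fun hcX => ha' x hcX y hyYL' hadj
    have hxS : x ∈ S := by
      have hX : x ∈ X := hXSX hxXS
      rw [← hXunion'] at hX
      rcases Finset.mem_union.mp hX with h | h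
      · exact absurd h hxnXS'
      · exact Finset.mem_inter.mpr ⟨hxXS, h⟩
    rw [← himg] at hxS
    obtain ⟨y', hy'T, hy'e⟩ := Finset.mem_image.mp hxS
    obtain ⟨i', hi', hy'B, hy'A, -⟩ := hψspec y' hy'T
    have hi'k : i' ≤ k := (Finset.mem_Icc.mp hi').2
    have hieq : i' = i₀ - 1 := hAeq i' (by omega) (i₀ - 1) (by omega) x (hy'e ▸ hy'A) hxA
    have hmem : i₀ - 1 ∈ I := Finset.mem_filter.mpr
      ⟨hieq ▸ hi', ⟨y', Finset.mem_inter.mpr ⟨hieq ▸ hy'B, hy'T⟩⟩⟩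
    have := Finset.min'_le I _ hmem
    omega
  have hSempty : S = ∅ := by
    have h0 : T.card = 0 := by rw [hTempty]; simp
    have h1 : S.card = 0 := by omega
    exact Finset.card_eq_zero.mp h1
  exact ⟨hSempty, hTempty⟩

/-- the partitions `X = X_S ⊔ X_L`, `Y = Y_S ⊔ Y_L` satisfying
(a) no edges between `X_S` and `Y_L`, (b) `G[X_S, Y_S]` is `Y`-path-saturated,
(c) `G[X_L, Y_L]` admits a matching saturating `X_L`, are unique. -/
theorem structure_partition_unique [Fintype V] (G : SimpleGraph V) (X Y : Finset V)
    (hBip : IsBipartition G X Y)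
    (XS XL YS YL XS' XL' YS' YL' : Finset V)
    (hXdisj : Disjoint XS XL) (hXunion : XS ∪ XL = X)
    (hYdisj : Disjoint YS YL) (hYunion : YS ∪ YL = Y)
    (ha : ∀ x ∈ XS, ∀ y ∈ YL, ¬ G.Adj x y)
    (hb : YPathSaturated G XS YS)
    (hc : ∃ M : Finset (V × V), IsBipMatching G XL YL M ∧ XL ⊆ M.image Prod.fst)
    (hXdisj' : Disjoint XS' XL') (hXunion' : XS' ∪ XL' = X)
    (hYdisj' : Disjoint YS' YL') (hYunion' : YS' ∪ YL' = Y)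
    (ha' : ∀ x ∈ XS', ∀ y ∈ YL', ¬ G.Adj x y)
    (hb' : YPathSaturated G XS' YS')
    (hc' : ∃ M : Finset (V × V), IsBipMatching G XL' YL' M ∧ XL' ⊆ M.image Prod.fst) :
    XS = XS' ∧ XL = XL' ∧ YS = YS' ∧ YL = YL' := by
  classical
  have h1 := structure_partition_aux G X Y hBip XS XL YS YL XS' XL' YL'
    hXunion hYunion ha hb hXunion' ha' hc'
  have h2 := structure_partition_aux G X Y hBip XS' XL' YS' YL' XS XL YL
    hXunion' hYunion' ha' hb' hXunion ha hc
  have d1 : ∀ x ∈ XS, x ∉ XL' := by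
    intro x hx hcx
    have hm := Finset.mem_inter.mpr ⟨hx, hcx⟩
    rw [h1.1] at hm
    exact Finset.notMem_empty x hm
  have d2 : ∀ y ∈ YS, y ∉ YL' := by
    intro y hy hcy
    have hm := Finset.mem_inter.mpr ⟨hy, hcy⟩
    rw [h1.2] at hm
    exact Finset.notMem_empty y hm
  have d3 : ∀ x ∈ XS', x ∉ XL := by
    intro x hx hcx
    have hm := Finset.mem_inter.mpr ⟨hx, hcx⟩
    rw [h2.1] at hm
    exact Finset.notMem_empty x hm
  have d4 : ∀ y ∈ YS', y ∉ YL := by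
    intro y hy hcy
    have hm := Finset.mem_inter.mpr ⟨hy, hcy⟩
    rw [h2.2] at hm
    exact Finset.notMem_empty y hm
  have hXSeq : XS = XS' := by
    apply Finset.Subset.antisymm
    · intro x hx
      have hX : x ∈ X := by rw [← hXunion]; exact Finset.mem_union_left _ hx
      rw [← hXunion'] at hX
      rcases Finset.mem_union.mp hX with h | h
      · exact h
      · exact absurd h (d1 x hx)
    · intro x hx
      have hX : x ∈ X := by rw [← hXunion']; exact Finset.mem_union_left _ hx
      rw [← hXunion] at hX
      rcases Finset.mem_union.mp hX with h | h
      · exact h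
      · exact absurd h (d3 x hx)
  have hYSeq : YS = YS' := by
    apply Finset.Subset.antisymm
    · intro y hy
      have hY : y ∈ Y := by rw [← hYunion]; exact Finset.mem_union_left _ hy
      rw [← hYunion'] at hY
      rcases Finset.mem_union.mp hY with h | h
      · exact h
      · exact absurd h (d2 y hy)
    · intro y hy
      have hY : y ∈ Y := by rw [← hYunion']; exact Finset.mem_union_left _ hy
      rw [← hYunion] at hY
      rcases Finset.mem_union.mp hY with h | h
      · exact h
      · exact absurd h (d4 y hy)
  have hXLeq : XL = XL' := by
    apply Finset.Subset.antisymm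
    · intro x hx
      have hX : x ∈ X := by rw [← hXunion]; exact Finset.mem_union_right _ hx
      rw [← hXunion'] at hX
      rcases Finset.mem_union.mp hX with h | h
      · rw [← hXSeq] at h
        exact absurd hx (Finset.disjoint_left.mp hXdisj h)
      · exact h
    · intro x hx
      have hX : x ∈ X := by rw [← hXunion']; exact Finset.mem_union_right _ hx
      rw [← hXunion] at hX
      rcases Finset.mem_union.mp hX with h | h
      · rw [hXSeq] at h
        exact absurd hx (Finset.disjoint_left.mp hXdisj' h)
      · exact h
  have hYLeq : YL = YL' := by
    apply Finset.Subset.antisymm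
    · intro y hy
      have hY : y ∈ Y := by rw [← hYunion]; exact Finset.mem_union_right _ hy
      rw [← hYunion'] at hY
      rcases Finset.mem_union.mp hY with h | h
      · rw [← hYSeq] at h
        exact absurd hy (Finset.disjoint_left.mp hYdisj h)
      · exact h
    · intro y hy
      have hY : y ∈ Y := by rw [← hYunion']; exact Finset.mem_union_right _ hy
      rw [← hYunion] at hY
      rcases Finset.mem_union.mp hY with h | h
      · rw [hYSeq] at h
        exact absurd hy (Finset.disjoint_left.mp hYdisj' h)
      · exact h
  exact ⟨hXSeq, hXLeq, hYSeq, hYLeq⟩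
end

section
/- Let G = (X ⊔ Y, E) be a finite bipartite graph with partitions X = X_S ⊔ X_L and Y = Y_S ⊔ Y_L satisfying: (a) there are no edges between X_S and Y_L; (b) G[X_S, Y_S] is Y-path-saturated; (c) G[X_L, Y_L] admits a matching saturating X_L. Then G[X_L, Y_L] admits a matching that saturates every vertex of X_L and is an envy-free matching in G. -/
attribute [local instance] Classical.propDecidable

variable {V : Type*}

/-- under conditions (a), (b), (c), the subgraph `G[X_L, Y_L]` admits a
matching that saturates every vertex of `X_L` and is envy-free in `G`. -/
theorem exists_envy_free_saturating [Fintype V] (G : SimpleGraph V) (X Y : Finset V)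
    (hBip : IsBipartition G X Y)
    (XS XL YS YL : Finset V)
    (hXdisj : Disjoint XS XL) (hXunion : XS ∪ XL = X)
    (hYdisj : Disjoint YS YL) (hYunion : YS ∪ YL = Y)
    (ha : ∀ x ∈ XS, ∀ y ∈ YL, ¬ G.Adj x y)
    (hb : YPathSaturated G XS YS)
    (hc : ∃ M : Finset (V × V), IsBipMatching G XL YL M ∧ XL ⊆ M.image Prod.fst) :
    ∃ M : Finset (V × V), IsBipMatching G XL YL M ∧ XL ⊆ M.image Prod.fst ∧
      EnvyFree G X M := by
  obtain ⟨M, hM, hsat⟩ := hc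
  refine ⟨M, hM, hsat, ?_⟩
  intro x hx hxun y hy hadj
  obtain ⟨p, hp, hpy⟩ := Finset.mem_image.mp hy
  have hyL : y ∈ YL := hpy ▸ (hM.1 p hp).2.1
  have hxS : x ∈ XS := by
    rcases Finset.mem_union.mp (hXunion ▸ hx) with h | h
    · exact h
    · exact absurd (hsat h) hxun
  exact ha x hxS y hyL hadj
end

section
/- Let G = (X ⊔ Y, E) be a finite bipartite graph with partitions X = X_S ⊔ X_L and Y = Y_S ⊔ Y_L satisfying: (a) there are no edges between X_S and Y_L; (b) G[X_S, Y_S] is Y-path-saturated; (c) G[X_L, Y_L] admits a matching saturating X_L. Then every envy-free matching in G is contained in G[X_L, Y_L]; that is, every edge of an envy-free matching has one endpoint in X_L and the other in Y_L. -/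
attribute [local instance] Classical.propDecidable

variable {V : Type*}

/-- under conditions (a), (b), (c), every envy-free matching in `G` is
contained in `G[X_L, Y_L]`: each of its edges has one endpoint in `X_L` and the other
in `Y_L`. -/
theorem envy_free_contained [Fintype V] (G : SimpleGraph V) (X Y : Finset V)
    (hBip : IsBipartition G X Y)
    (XS XL YS YL : Finset V)
    (hXdisj : Disjoint XS XL) (hXunion : XS ∪ XL = X)
    (hYdisj : Disjoint YS YL) (hYunion : YS ∪ YL = Y)
    (ha : ∀ x ∈ XS, ∀ y ∈ YL, ¬ G.Adj x y)
    (hb : YPathSaturated G XS YS)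
    (hc : ∃ M : Finset (V × V), IsBipMatching G XL YL M ∧ XL ⊆ M.image Prod.fst) :
    ∀ W : Finset (V × V), IsBipMatching G X Y W → EnvyFree G X W →
      ∀ p ∈ W, p.1 ∈ XL ∧ p.2 ∈ YL := by
  classical
  intro W hW hEF
  obtain ⟨hWmem, hWdisj⟩ := hW
  set D := YS.filter (fun y => y ∈ W.image Prod.snd) with hDdef
  set E := XS.filter (fun x => x ∈ W.image Prod.fst) with hEdef
  -- every W-matched vertex of XS is matched into D
  have hED : E.card ≤ D.card := by
    apply Finset.card_le_card_of_injOn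
      (fun x => if h : ∃ q ∈ W, q.1 = x then h.choose.2 else x)
    · intro x hx
      rw [hEdef, Finset.mem_coe, Finset.mem_filter] at hx
      obtain ⟨hxXS, hxM⟩ := hx
      rw [Finset.mem_image] at hxM
      obtain ⟨q, hqW, hq1⟩ := hxM
      have h : ∃ q ∈ W, q.1 = x := ⟨q, hqW, hq1⟩
      simp only [dif_pos h]
      obtain ⟨hqW', hq1'⟩ := h.choose_spec
      have hq := hWmem _ hqW'
      have hadj := hq.2.2
      rw [hq1'] at hadj
      have h2YS : h.choose.2 ∈ YS := by
        have h2Y : h.choose.2 ∈ YS ∪ YL := by rw [hYunion]; exact hq.2.1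
        rcases Finset.mem_union.mp h2Y with h' | h'
        · exact h'
        · exact absurd hadj (ha x hxXS _ h')
      rw [hDdef, Finset.mem_coe, Finset.mem_filter]
      exact ⟨h2YS, Finset.mem_image.mpr ⟨h.choose, hqW', rfl⟩⟩
    · intro x1 hx1 x2 hx2 heq
      simp only [hEdef, Finset.coe_filter, Set.mem_setOf_eq, Finset.mem_image] at hx1 hx2
      obtain ⟨_, q1, hq1W, hq11⟩ := hx1
      obtain ⟨_, q2, hq2W, hq21⟩ := hx2
      have h1 : ∃ q ∈ W, q.1 = x1 := ⟨q1, hq1W, hq11⟩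
      have h2 : ∃ q ∈ W, q.1 = x2 := ⟨q2, hq2W, hq21⟩
      simp only [dif_pos h1, dif_pos h2] at heq
      obtain ⟨h1W, h11⟩ := h1.choose_spec
      obtain ⟨h2W, h21⟩ := h2.choose_spec
      by_cases hqq : h1.choose = h2.choose
      · rw [← h11, ← h21, hqq]
      · exact absurd heq (hWdisj _ h1W _ h2W hqq).2
  -- no matched vertex in YS
  have hDempty : ∀ y ∈ YS, y ∉ W.image Prod.snd := by
    intro y0 hy0 hy0M
    obtain ⟨k, hk1, A, B, hAdisj, hBdisj, hXSeq, hYSeq, hPM, hAdjprev⟩ := hb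
    -- per-level inequality
    have hDB : ∀ j ∈ Finset.Icc 1 k, (D ∩ B j).card ≤ (E ∩ A j).card := by
      intro j hj
      obtain ⟨f, hf, hfadj⟩ := hPM j hj
      have hAXS : A j ⊆ XS := by
        rw [hXSeq]
        intro x hx
        exact Finset.mem_biUnion.mpr ⟨j, Finset.mem_range.mpr
          (Nat.lt_succ_of_le (Finset.mem_Icc.mp hj).2), hx⟩
      apply Finset.card_le_card_of_injOn
        (fun y => if h : ∃ x ∈ (A j : Set V), f x = y then h.choose else y)
      · intro y hy
        rw [Finset.mem_coe, Finset.mem_inter] at hy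
        obtain ⟨hyD, hyB⟩ := hy
        have h : ∃ x ∈ (A j : Set V), f x = y := hf.surjOn hyB
        simp only [dif_pos h]
        obtain ⟨hxA, hfx⟩ := h.choose_spec
        have hxA' : h.choose ∈ A j := hxA
        have hadj : G.Adj h.choose y := by
          have := hfadj _ hxA'
          rwa [hfx] at this
        have hyM : y ∈ W.image Prod.snd := (Finset.mem_filter.mp hyD).2
        have hxX : h.choose ∈ X := by
          rw [← hXunion]; exact Finset.mem_union_left _ (hAXS hxA')
        have hxM : h.choose ∈ W.image Prod.fst := by
          by_contra hnot
          exact hEF _ hxX hnot y hyM hadj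
        exact Finset.mem_inter.mpr ⟨Finset.mem_filter.mpr ⟨hAXS hxA', hxM⟩, hxA'⟩
      · intro y1 hy1 y2 hy2 heq
        have hy1B : y1 ∈ B j := (Finset.mem_inter.mp hy1).2
        have hy2B : y2 ∈ B j := (Finset.mem_inter.mp hy2).2
        have h1 : ∃ x ∈ (A j : Set V), f x = y1 := hf.surjOn hy1B
        have h2 : ∃ x ∈ (A j : Set V), f x = y2 := hf.surjOn hy2B
        simp only [dif_pos h1, dif_pos h2] at heq
        rw [← h1.choose_spec.2, ← h2.choose_spec.2, heq]
    -- cardinality decompositions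
    have hEcard : E.card = ∑ j ∈ Finset.range (k + 1), (E ∩ A j).card := by
      have : E = (Finset.range (k + 1)).biUnion (fun j => E ∩ A j) := by
        ext x
        simp only [Finset.mem_biUnion, Finset.mem_inter]
        constructor
        · intro hx
          have hxXS : x ∈ XS := (Finset.mem_filter.mp hx).1
          rw [hXSeq] at hxXS
          obtain ⟨j, hj, hxA⟩ := Finset.mem_biUnion.mp hxXS
          exact ⟨j, hj, hx, hxA⟩
        · rintro ⟨j, _, hx, _⟩; exact hx
      conv_lhs => rw [this]
      exact Finset.card_biUnion fun j hj l hl hne =>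
        (hAdisj j hj l hl hne).mono Finset.inter_subset_right Finset.inter_subset_right
    have hDcard : D.card = ∑ j ∈ Finset.Icc 1 k, (D ∩ B j).card := by
      have : D = (Finset.Icc 1 k).biUnion (fun j => D ∩ B j) := by
        ext y
        simp only [Finset.mem_biUnion, Finset.mem_inter]
        constructor
        · intro hy
          have hyYS : y ∈ YS := (Finset.mem_filter.mp hy).1
          rw [hYSeq] at hyYS
          obtain ⟨j, hj, hyB⟩ := Finset.mem_biUnion.mp hyYS
          exact ⟨j, hj, hy, hyB⟩
        · rintro ⟨j, _, hy, _⟩; exact hy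
      conv_lhs => rw [this]
      exact Finset.card_biUnion fun j hj l hl hne =>
        (hBdisj j hj l hl hne).mono Finset.inter_subset_right Finset.inter_subset_right
    -- minimal level with a matched Y vertex
    set S := (Finset.Icc 1 k).filter (fun i => (D ∩ B i).Nonempty) with hSdef
    have hSne : S.Nonempty := by
      have hy0D : y0 ∈ D := Finset.mem_filter.mpr ⟨hy0, hy0M⟩
      have hy0' : y0 ∈ YS := hy0
      rw [hYSeq] at hy0'
      obtain ⟨j, hj, hyB⟩ := Finset.mem_biUnion.mp hy0'
      exact ⟨j, Finset.mem_filter.mpr ⟨hj, ⟨y0, Finset.mem_inter.mpr ⟨hy0D, hyB⟩⟩⟩⟩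
    set i := S.min' hSne with hidef
    have hiS : i ∈ S := Finset.min'_mem _ _
    have hiIcc : i ∈ Finset.Icc 1 k := (Finset.mem_filter.mp hiS).1
    have hiNe : (D ∩ B i).Nonempty := (Finset.mem_filter.mp hiS).2
    have hi1 : 1 ≤ i := (Finset.mem_Icc.mp hiIcc).1
    have hik : i ≤ k := (Finset.mem_Icc.mp hiIcc).2
    have hmin : ∀ j ∈ Finset.Icc 1 k, (D ∩ B j).Nonempty → i ≤ j := by
      intro j hj hne
      exact Finset.min'_le _ _ (Finset.mem_filter.mpr ⟨hj, hne⟩)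
    -- a matched vertex in A (i-1)
    have hEprev : (E ∩ A (i - 1)).Nonempty := by
      obtain ⟨y, hy⟩ := hiNe
      rw [Finset.mem_inter] at hy
      obtain ⟨x, hxA, hadj⟩ := hAdjprev i hiIcc y hy.2
      have hAXS : A (i - 1) ⊆ XS := by
        rw [hXSeq]
        intro z hz
        exact Finset.mem_biUnion.mpr ⟨i - 1, Finset.mem_range.mpr
          (Nat.lt_succ_of_le (le_trans (Nat.sub_le i 1) hik)), hz⟩
      have hxX : x ∈ X := by rw [← hXunion]; exact Finset.mem_union_left _ (hAXS hxA)
      have hyM : y ∈ W.image Prod.snd := (Finset.mem_filter.mp hy.1).2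
      have hxM : x ∈ W.image Prod.fst := by
        by_contra hnot
        exact hEF _ hxX hnot y hyM hadj
      exact ⟨x, Finset.mem_inter.mpr ⟨Finset.mem_filter.mpr ⟨hAXS hxA, hxM⟩, hxA⟩⟩
    -- the counting contradiction
    have hzero : ∑ j ∈ Finset.Icc 1 k, (D ∩ B j).card
        = ∑ j ∈ (Finset.Icc 1 k).erase (i - 1), (D ∩ B j).card := by
      by_cases h : i - 1 ∈ Finset.Icc 1 k
      · refine (Finset.sum_erase _ ?_).symm
        rw [Finset.card_eq_zero]
        by_contra hne
        have := hmin _ h (Finset.nonempty_iff_ne_empty.mpr hne)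
        omega
      · rw [Finset.erase_eq_of_notMem h]
    have hsub : insert (i - 1) ((Finset.Icc 1 k).erase (i - 1)) ⊆ Finset.range (k + 1) := by
      intro j hj
      rcases Finset.mem_insert.mp hj with h | h
      · subst h; exact Finset.mem_range.mpr (by omega)
      · have := (Finset.mem_Icc.mp (Finset.mem_of_mem_erase h)).2
        exact Finset.mem_range.mpr (by omega)
    have hfinal : D.card + 1 ≤ E.card := by
      calc D.card + 1 = (∑ j ∈ (Finset.Icc 1 k).erase (i - 1), (D ∩ B j).card) + 1 := by
            rw [hDcard, hzero]
        _ ≤ (∑ j ∈ (Finset.Icc 1 k).erase (i - 1), (E ∩ A j).card) + (E ∩ A (i - 1)).card := by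
            exact Nat.add_le_add
              (Finset.sum_le_sum fun j hj => hDB j (Finset.mem_of_mem_erase hj))
              (Finset.card_pos.mpr hEprev)
        _ = ∑ j ∈ insert (i - 1) ((Finset.Icc 1 k).erase (i - 1)), (E ∩ A j).card := by
            rw [Finset.sum_insert (Finset.notMem_erase _ _)]; ring
        _ ≤ ∑ j ∈ Finset.range (k + 1), (E ∩ A j).card :=
            Finset.sum_le_sum_of_subset hsub
        _ = E.card := hEcard.symm
    omega
  -- conclude
  intro p hp
  obtain ⟨hpX, hpY, hpadj⟩ := hWmem p hp
  have hp2 : p.2 ∈ YL := by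
    have : p.2 ∈ YS ∪ YL := by rw [hYunion]; exact hpY
    rcases Finset.mem_union.mp this with h | h
    · exact absurd (Finset.mem_image.mpr ⟨p, hp, rfl⟩) (hDempty _ h)
    · exact h
  refine ⟨?_, hp2⟩
  have : p.1 ∈ XS ∪ XL := by rw [hXunion]; exact hpX
  rcases Finset.mem_union.mp this with h | h
  · exact absurd hpadj (ha _ h _ hp2)
  · exact h
end

section
/- A finite bipartite graph G = (X ⊔ Y, E) admits a nonempty envy-free matching if and only if the bipartite graph (X ⊔ N_G(X), E), obtained from G by deleting the vertices of Y that have no neighbor in X, is not Y-path-saturated. -/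
attribute [local instance] Classical.propDecidable

variable {V : Type*}

lemma no_EFM_of_sat [Fintype V] (G : SimpleGraph V) (X : Finset V)
    (hsat : YPathSaturated G X (Finset.univ.filter fun y => ∃ x ∈ X, G.Adj x y))
    (M : Finset (V × V)) (hM1 : ∀ p ∈ M, p.1 ∈ X ∧ G.Adj p.1 p.2)
    (hM2 : ∀ p ∈ M, ∀ q ∈ M, p ≠ q → p.1 ≠ q.1 ∧ p.2 ≠ q.2)
    (hne : M.Nonempty) (hEF : EnvyFree G X M) : False := by
  classical
  have : Nonempty V := ⟨hne.choose.1⟩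
  obtain ⟨k, hk1, A, B, hAd, hBd, hXeq, hYeq, hmt, hadj⟩ := hsat
  set S := M.image Prod.fst with hS
  set T := M.image Prod.snd with hT
  -- partner function
  have hmS : ∀ x ∈ S, ∃ y, (x, y) ∈ M := by
    intro x hx
    rw [hS, Finset.mem_image] at hx
    obtain ⟨p, hp, rfl⟩ := hx
    exact ⟨p.2, hp⟩
  choose! pm hpm using hmS
  have hpmT : ∀ x ∈ S, pm x ∈ T := by
    intro x hx
    exact Finset.mem_image.2 ⟨(x, pm x), hpm x hx, rfl⟩
  -- every matched y lies in some B j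
  have hTj : ∀ y ∈ T, ∃ j, j ∈ Finset.Icc 1 k ∧ y ∈ B j := by
    intro y hy
    rw [hT, Finset.mem_image] at hy
    obtain ⟨p, hp, rfl⟩ := hy
    have hyY' : p.2 ∈ Finset.univ.filter fun y => ∃ x ∈ X, G.Adj x y := by
      simp only [Finset.mem_filter, Finset.mem_univ, true_and]
      exact ⟨p.1, (hM1 p hp).1, (hM1 p hp).2⟩
    rw [hYeq] at hyY'
    obtain ⟨j, hj, hjB⟩ := Finset.mem_biUnion.1 hyY'
    exact ⟨j, hj, hjB⟩
  choose! jd hjd1 hjd2 using hTj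
  -- perfect matching functions
  choose! F hF1 hF2 using hmt
  -- inverse of F on matched ys
  have hgex : ∀ y ∈ T, ∃ x, x ∈ A (jd y) ∧ F (jd y) x = y := by
    intro y hy
    obtain ⟨x, hx, hfx⟩ := (hF1 (jd y) (hjd1 y hy)).2.2 (Finset.mem_coe.2 (hjd2 y hy))
    exact ⟨x, Finset.mem_coe.1 hx, hfx⟩
  choose! g hg1 hg2 using hgex
  -- minimal index
  have hTne : T.Nonempty := hne.image _
  have hine : (T.image jd).Nonempty := hTne.image _
  set i := (T.image jd).min' hine with hi
  have hiIcc : i ∈ Finset.Icc 1 k := by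
    have := (T.image jd).min'_mem hine
    rw [← hi] at this
    obtain ⟨y, hy, hjy⟩ := Finset.mem_image.1 this
    exact hjy ▸ hjd1 y hy
  have hile : ∀ y ∈ T, i ≤ jd y := fun y hy =>
    (T.image jd).min'_le _ (Finset.mem_image_of_mem _ hy)
  obtain ⟨y₀, hy₀T, hy₀i⟩ := by
    have := (T.image jd).min'_mem hine
    rw [← hi] at this
    exact Finset.mem_image.1 this
  -- x₀
  obtain ⟨x₀, hx₀A, hx₀adj⟩ := hadj i hiIcc y₀ (hy₀i ▸ hjd2 y₀ hy₀T)
  have hi1 : 1 ≤ i := (Finset.mem_Icc.1 hiIcc).1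
  have hik : i ≤ k := (Finset.mem_Icc.1 hiIcc).2
  have hAX : ∀ j ∈ Finset.range (k+1), ∀ x ∈ A j, x ∈ X := by
    intro j hj x hx
    rw [hXeq]
    exact Finset.mem_biUnion.2 ⟨j, hj, hx⟩
  have hx₀X : x₀ ∈ X := hAX (i-1) (Finset.mem_range.2 (by omega)) x₀ hx₀A
  -- envy-freeness: adjacency to matched y forces membership in S
  have key : ∀ x ∈ X, ∀ y ∈ T, G.Adj x y → x ∈ S := by
    intro x hx y hy hadj'
    by_contra hxS
    exact hEF x hx hxS y hy hadj'
  have hx₀S : x₀ ∈ S := key x₀ hx₀X y₀ hy₀T hx₀adj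
  -- the injective map
  set h : V → V := fun x => g (pm x) with hh
  have hhA : ∀ x ∈ S, h x ∈ A (jd (pm x)) := fun x hx => hg1 (pm x) (hpmT x hx)
  have hhF : ∀ x ∈ S, F (jd (pm x)) (h x) = pm x := fun x hx => hg2 (pm x) (hpmT x hx)
  have hjIcc : ∀ x ∈ S, jd (pm x) ∈ Finset.Icc 1 k := fun x hx => hjd1 (pm x) (hpmT x hx)
  have hhadj : ∀ x ∈ S, G.Adj (h x) (pm x) := by
    intro x hx
    have := hF2 (jd (pm x)) (hjIcc x hx) (h x) (hhA x hx)
    rwa [hhF x hx] at this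
  have hhS : ∀ x ∈ S, h x ∈ S := by
    intro x hx
    have hXmem : h x ∈ X := hAX (jd (pm x))
      (Finset.mem_range.2 (by have := (Finset.mem_Icc.1 (hjIcc x hx)).2; omega)) _ (hhA x hx)
    exact key _ hXmem _ (hpmT x hx) (hhadj x hx)
  have hhne : ∀ x ∈ S, h x ≠ x₀ := by
    intro x hx heq
    have hji : i ≤ jd (pm x) := hile _ (hpmT x hx)
    have hd : Disjoint (A (jd (pm x))) (A (i-1)) := by
      refine hAd _ (Finset.mem_range.2 ?_) _ (Finset.mem_range.2 (by omega)) (by omega)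
      have := (Finset.mem_Icc.1 (hjIcc x hx)).2; omega
    exact Finset.disjoint_left.1 hd (heq ▸ hhA x hx) hx₀A
  have hinj : Set.InjOn h S := by
    intro x hx x' hx' heq
    have hx := Finset.mem_coe.1 hx
    have hx' := Finset.mem_coe.1 hx'
    have hjeq : jd (pm x) = jd (pm x') := by
      by_contra hne'
      have hd : Disjoint (A (jd (pm x))) (A (jd (pm x'))) := by
        refine hAd _ (Finset.mem_range.2 ?_) _ (Finset.mem_range.2 ?_) hne'
        · have := (Finset.mem_Icc.1 (hjIcc x hx)).2; omega
        · have := (Finset.mem_Icc.1 (hjIcc x' hx')).2; omega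
      exact Finset.disjoint_left.1 hd (hhA x hx) (heq ▸ hhA x' hx')
    have hpmeq : pm x = pm x' := by
      have h1 := hhF x hx
      have h2 := hhF x' hx'
      rw [← h1, ← h2, heq, hjeq]
    by_contra hxx
    have hpne : (x, pm x) ≠ (x', pm x') := by
      intro hc; exact hxx (congrArg Prod.fst hc)
    exact (hM2 _ (hpm x hx) _ (hpm x' hx') hpne).2 hpmeq
  -- contradiction by cardinality
  have hmaps : ∀ x ∈ S, h x ∈ S.erase x₀ :=
    fun x hx => Finset.mem_erase.2 ⟨hhne x hx, hhS x hx⟩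
  have hcard := Finset.card_le_card_of_injOn h hmaps hinj
  have := Finset.card_erase_lt_of_mem hx₀S
  omega

/-! ### Alternating BFS layers -/

noncomputable def cumL (G : SimpleGraph V) (Y' : Finset V) (M : Finset (V × V))
    (D0 : Finset V) : ℕ → Finset V × Finset V
  | 0 => (D0, ∅)
  | n+1 =>
    let p := cumL G Y' M D0 n
    let e := (Y'.filter fun y => ∃ x ∈ p.1, G.Adj x y) \ p.2
    (p.1 ∪ (M.filter fun q => q.2 ∈ e).image Prod.fst, p.2 ∪ e)

noncomputable def nE (G : SimpleGraph V) (Y' : Finset V) (M : Finset (V × V))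
    (D0 : Finset V) (n : ℕ) : Finset V :=
  (Y'.filter fun y => ∃ x ∈ (cumL G Y' M D0 n).1, G.Adj x y) \ (cumL G Y' M D0 n).2

noncomputable def nD (G : SimpleGraph V) (Y' : Finset V) (M : Finset (V × V))
    (D0 : Finset V) (n : ℕ) : Finset V :=
  (M.filter fun q => q.2 ∈ nE G Y' M D0 n).image Prod.fst

section Layers

variable (G : SimpleGraph V) (Y' : Finset V) (M : Finset (V × V)) (D0 : Finset V)

lemma cumL_succ (n : ℕ) :
    cumL G Y' M D0 (n+1) =
      ((cumL G Y' M D0 n).1 ∪ nD G Y' M D0 n, (cumL G Y' M D0 n).2 ∪ nE G Y' M D0 n) := rfl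

lemma cum_mono {m n : ℕ} (h : m ≤ n) :
    (cumL G Y' M D0 m).1 ⊆ (cumL G Y' M D0 n).1 ∧
      (cumL G Y' M D0 m).2 ⊆ (cumL G Y' M D0 n).2 := by
  induction n with
  | zero =>
    have hm : m = 0 := by omega
    subst hm; exact ⟨subset_rfl, subset_rfl⟩
  | succ n ih =>
    rcases Nat.lt_or_ge m (n+1) with hm | hm
    · have := ih (by omega)
      rw [cumL_succ]
      exact ⟨this.1.trans Finset.subset_union_left, this.2.trans Finset.subset_union_left⟩
    · have : m = n + 1 := by omega
      subst this
      exact ⟨subset_rfl, subset_rfl⟩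

lemma nE_disj_cum (n : ℕ) : Disjoint (nE G Y' M D0 n) ((cumL G Y' M D0 n).2) :=
  Finset.sdiff_disjoint

lemma nE_sub (n : ℕ) : nE G Y' M D0 n ⊆ Y' :=
  (Finset.sdiff_subset).trans (Finset.filter_subset _ _)

lemma cum2_sub (n : ℕ) : (cumL G Y' M D0 n).2 ⊆ Y' := by
  induction n with
  | zero => simp [cumL]
  | succ n ih =>
    rw [cumL_succ]
    exact Finset.union_subset ih (nE_sub G Y' M D0 n)

lemma nD_sub (n : ℕ) : nD G Y' M D0 n ⊆ M.image Prod.fst := by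
  apply Finset.image_subset_image
  exact Finset.filter_subset _ _

lemma cum1_sub {X : Finset V} (hD0 : D0 ⊆ X) (hM1 : ∀ p ∈ M, p.1 ∈ X) (n : ℕ) :
    (cumL G Y' M D0 n).1 ⊆ X := by
  induction n with
  | zero => simpa [cumL]
  | succ n ih =>
    rw [cumL_succ]
    refine Finset.union_subset ih ?_
    intro x hx
    obtain ⟨p, hp, rfl⟩ := Finset.mem_image.1 (nD_sub G Y' M D0 n hx)
    exact hM1 p hp

lemma partner_mem (n : ℕ) :
    ∀ p ∈ M, p.2 ∈ (cumL G Y' M D0 n).2 → p.1 ∈ (cumL G Y' M D0 n).1 := by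
  induction n with
  | zero => intro p _ hp; simp [cumL] at hp
  | succ n ih =>
    intro p hp h2
    rw [cumL_succ] at h2 ⊢
    rcases Finset.mem_union.1 h2 with h | h
    · exact Finset.mem_union_left _ (ih p hp h)
    · refine Finset.mem_union_right _ ?_
      exact Finset.mem_image.2 ⟨p, Finset.mem_filter.2 ⟨hp, h⟩, rfl⟩

lemma cum2_eq_biUnion (n : ℕ) :
    (cumL G Y' M D0 n).2 = (Finset.range n).biUnion (nE G Y' M D0) := by
  induction n with
  | zero => simp [cumL]
  | succ n ih =>
    rw [cumL_succ, Finset.range_add_one, Finset.biUnion_insert, ih]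
    exact Finset.union_comm _ _

lemma nE_stab {n : ℕ} (h : nE G Y' M D0 n = ∅) : cumL G Y' M D0 (n+1) = cumL G Y' M D0 n := by
  rw [cumL_succ, nD, h]
  simp

lemma nE_stab' {n : ℕ} (h : nE G Y' M D0 n = ∅) : nE G Y' M D0 (n+1) = ∅ := by
  rw [nE, nE_stab G Y' M D0 h, ← nE, h]

lemma nE_growth (n : ℕ) (h : nE G Y' M D0 n ≠ ∅) :
    n + 1 ≤ ((cumL G Y' M D0 (n+1)).2).card := by
  induction n with
  | zero =>
    rw [cumL_succ]
    simp only [cumL]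
    rw [Finset.empty_union]
    exact Finset.card_pos.2 (Finset.nonempty_iff_ne_empty.2 h)
  | succ n ih =>
    have hn : nE G Y' M D0 n ≠ ∅ := fun hc => h (nE_stab' G Y' M D0 hc)
    have h1 := ih hn
    rw [cumL_succ]
    rw [Finset.card_union_of_disjoint (nE_disj_cum G Y' M D0 (n+1)).symm]
    have : 1 ≤ (nE G Y' M D0 (n+1)).card :=
      Finset.card_pos.2 (Finset.nonempty_iff_ne_empty.2 h)
    omega

lemma matching_card {X' Y'' : Finset V} {N : Finset (V × V)} (hN : IsBipMatching G X' Y'' N) :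
    N.card = (N.image Prod.snd).card := by
  refine (Finset.card_image_of_injOn ?_).symm
  intro p hp q hq hpq
  by_contra hne
  exact (hN.2 p hp q hq hne).2 hpq

lemma inv_lemma {X : Finset V} (hM : IsBipMatching G X Y' M)
    (hD0 : D0 = X \ M.image Prod.fst) (n : ℕ) :
    ∀ x ∈ (cumL G Y' M D0 n).1, ∃ N : Finset (V × V), IsBipMatching G X Y' N ∧
      N.image Prod.snd = M.image Prod.snd ∧ x ∉ N.image Prod.fst ∧
      ∀ p ∈ M, p.2 ∉ (cumL G Y' M D0 n).2 → p ∈ N := by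
  induction n with
  | zero =>
    intro x hx
    rw [show (cumL G Y' M D0 0).1 = D0 from rfl, hD0, Finset.mem_sdiff] at hx
    exact ⟨M, hM, rfl, hx.2, fun p hp _ => hp⟩
  | succ n ih =>
    intro x hx
    rw [cumL_succ] at hx
    rcases Finset.mem_union.1 hx with hx | hx
    · obtain ⟨N, hN, hNs, hNx, hNa⟩ := ih x hx
      refine ⟨N, hN, hNs, hNx, fun p hp h2 => hNa p hp ?_⟩
      intro hc
      exact h2 (by rw [cumL_succ]; exact Finset.mem_union_left _ hc)
    · obtain ⟨p', hp'f, rfl⟩ := Finset.mem_image.1 hx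
      obtain ⟨hp'M, hp'e⟩ := Finset.mem_filter.1 hp'f
      have he := Finset.mem_sdiff.1 hp'e
      have he1 := Finset.mem_filter.1 he.1
      obtain ⟨x₁, hx₁, hadj1⟩ := he1.2
      obtain ⟨N, hN, hNs, hNx, hNa⟩ := ih x₁ hx₁
      have hp'N : p' ∈ N := hNa p' hp'M he.2
      have hx₁X : x₁ ∈ X := cum1_sub G Y' M D0 (hD0 ▸ Finset.sdiff_subset)
        (fun p hp => (hM.1 p hp).1) n hx₁
      have hx₁notf : ∀ q ∈ N, q.1 ≠ x₁ := by
        intro q hq hc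
        exact hNx (Finset.mem_image.2 ⟨q, hq, hc⟩)
      have hsndinj : ∀ q ∈ N, q.2 = p'.2 → q = p' := by
        intro q hq hc
        by_contra hne
        exact (hN.2 q hq p' hp'N hne).2 hc
      refine ⟨insert (x₁, p'.2) (N.erase p'), ?_, ?_, ?_, ?_⟩
      · constructor
        · intro p hp
          rcases Finset.mem_insert.1 hp with rfl | hp
          · exact ⟨hx₁X, (hM.1 p' hp'M).2.1, hadj1⟩
          · exact hN.1 p (Finset.mem_of_mem_erase hp)
        · intro p hp q hq hpq
          rcases Finset.mem_insert.1 hp with rfl | hp <;>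
            rcases Finset.mem_insert.1 hq with rfl | hq
          · exact absurd rfl hpq
          · refine ⟨fun hc => hx₁notf q (Finset.mem_of_mem_erase hq) hc.symm, fun hc => ?_⟩
            exact (Finset.ne_of_mem_erase hq) (hsndinj q (Finset.mem_of_mem_erase hq) hc.symm)
          · refine ⟨fun hc => hx₁notf p (Finset.mem_of_mem_erase hp) hc, fun hc => ?_⟩
            exact (Finset.ne_of_mem_erase hp) (hsndinj p (Finset.mem_of_mem_erase hp) hc)
          · exact hN.2 p (Finset.mem_of_mem_erase hp) q (Finset.mem_of_mem_erase hq) hpq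
      · rw [← hNs]
        ext y
        simp only [Finset.mem_image]
        constructor
        · rintro ⟨q, hq, rfl⟩
          rcases Finset.mem_insert.1 hq with rfl | hq
          · exact ⟨p', hp'N, rfl⟩
          · exact ⟨q, Finset.mem_of_mem_erase hq, rfl⟩
        · rintro ⟨q, hq, rfl⟩
          by_cases hqp : q = p'
          · subst hqp
            exact ⟨(x₁, q.2), Finset.mem_insert_self _ _, rfl⟩
          · exact ⟨q, Finset.mem_insert_of_mem (Finset.mem_erase.2 ⟨hqp, hq⟩), rfl⟩
      · intro hc
        obtain ⟨q, hq, hq1⟩ := Finset.mem_image.1 hc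
        rcases Finset.mem_insert.1 hq with rfl | hq
        · exact hx₁notf p' hp'N hq1.symm
        · have hq' := Finset.mem_erase.1 hq
          exact (hN.2 q hq'.2 p' hp'N hq'.1).1 hq1
      · intro p hp h2
        rw [cumL_succ] at h2
        simp only [Finset.mem_union] at h2
        push_neg at h2
        have hpN := hNa p hp h2.1
        have hpne : p ≠ p' := by
          intro hc
          exact h2.2 (hc ▸ hp'e)
        exact Finset.mem_insert_of_mem (Finset.mem_erase.2 ⟨hpne, hpN⟩)

lemma reached_matched {X : Finset V} (hM : IsBipMatching G X Y' M)
    (hD0 : D0 = X \ M.image Prod.fst)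
    (hmax : ∀ N, IsBipMatching G X Y' N → N.card ≤ M.card) (n : ℕ) :
    ∀ y ∈ (cumL G Y' M D0 n).2, y ∈ M.image Prod.snd := by
  induction n with
  | zero => intro y hy; simp [cumL] at hy
  | succ n ih =>
    intro y hy
    rw [cumL_succ] at hy
    rcases Finset.mem_union.1 hy with hy | hy
    · exact ih y hy
    · by_contra hyM
      have he := Finset.mem_sdiff.1 hy
      have he1 := Finset.mem_filter.1 he.1
      obtain ⟨x, hx, hadjx⟩ := he1.2
      obtain ⟨N, hN, hNs, hNx, -⟩ := inv_lemma G Y' M D0 hM hD0 n x hx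
      have hxy : (x, y) ∉ N := fun hc => hNx (Finset.mem_image.2 ⟨_, hc, rfl⟩)
      have hxX : x ∈ X := cum1_sub G Y' M D0 (hD0 ▸ Finset.sdiff_subset)
        (fun p hp => (hM.1 p hp).1) n hx
      have hmatch' : IsBipMatching G X Y' (insert (x, y) N) := by
        constructor
        · intro p hp
          rcases Finset.mem_insert.1 hp with rfl | hp
          · exact ⟨hxX, he1.1, hadjx⟩
          · exact hN.1 p hp
        · intro p hp q hq hpq
          rcases Finset.mem_insert.1 hp with rfl | hp <;>
            rcases Finset.mem_insert.1 hq with rfl | hq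
          · exact absurd rfl hpq
          · refine ⟨fun hc => hNx (Finset.mem_image.2 ⟨q, hq, hc.symm⟩), fun hc => ?_⟩
            exact hyM (hNs ▸ Finset.mem_image.2 ⟨q, hq, hc.symm⟩)
          · refine ⟨fun hc => hNx (Finset.mem_image.2 ⟨p, hp, hc⟩), fun hc => ?_⟩
            exact hyM (hNs ▸ Finset.mem_image.2 ⟨p, hp, hc⟩)
          · exact hN.2 p hp q hq hpq
      have hcard : N.card = M.card := by
        rw [matching_card G hN, matching_card G hM, hNs]
      have := hmax (insert (x, y) N) hmatch'
      rw [Finset.card_insert_of_notMem hxy] at this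
      omega

end Layers

lemma sat_of_no_EFM [Fintype V] {G' : SimpleGraph V} {X Y : Finset V}
    (hBip : IsBipartition G' X Y)
    (h : ¬ ∃ M : Finset (V × V), IsBipMatching G' X Y M ∧ M.Nonempty ∧ EnvyFree G' X M) :
    YPathSaturated G' X (Finset.univ.filter fun y => ∃ x ∈ X, G'.Adj x y) := by
  classical
  set Y' := Finset.univ.filter (fun y => ∃ x ∈ X, G'.Adj x y) with hY'def
  have hY'mem : ∀ y, y ∈ Y' ↔ ∃ x ∈ X, G'.Adj x y := by
    intro y; simp [hY'def]
  have hY'Y : Y' ⊆ Y := by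
    intro y hy
    obtain ⟨x, hxX, hadj⟩ := (hY'mem y).1 hy
    rcases hBip.2.2 hadj with ⟨_, h2⟩ | ⟨h1, _⟩
    · exact h2
    · exact absurd h1 (Finset.disjoint_left.1 hBip.1 hxX)
  obtain ⟨M, hM, hmax⟩ : ∃ M, IsBipMatching G' X Y' M ∧
      ∀ N, IsBipMatching G' X Y' N → N.card ≤ M.card := by
    obtain ⟨M, hMmem, hmax⟩ := Finset.exists_max_image
      (Finset.univ.powerset.filter fun M : Finset (V × V) => IsBipMatching G' X Y' M)
      Finset.card
      ⟨∅, Finset.mem_filter.2 ⟨Finset.mem_powerset.2 (Finset.subset_univ _),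
        by constructor <;> simp⟩⟩
    exact ⟨M, (Finset.mem_filter.1 hMmem).2,
      fun N hN => hmax N (Finset.mem_filter.2 ⟨Finset.mem_powerset.2 (Finset.subset_univ N), hN⟩)⟩
  set D0 := X \ M.image Prod.fst with hD0
  have hM1X : ∀ p ∈ M, p.1 ∈ X := fun p hp => (hM.1 p hp).1
  have hD0X : D0 ⊆ X := Finset.sdiff_subset
  set n₀ := Y'.card with hn₀
  have hstop0 : nE G' Y' M D0 n₀ = ∅ := by
    by_contra hc
    have h1 := nE_growth G' Y' M D0 n₀ hc
    have h2 := Finset.card_le_card (cum2_sub G' Y' M D0 (n₀+1))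
    omega
  set k := n₀ + 1 with hk
  have hstopk : nE G' Y' M D0 k = ∅ := nE_stab' G' Y' M D0 hstop0
  have hclosed : ∀ y ∈ Y', (∃ x ∈ (cumL G' Y' M D0 k).1, G'.Adj x y) →
      y ∈ (cumL G' Y' M D0 k).2 := by
    intro y hy hex
    by_contra hc
    have : y ∈ nE G' Y' M D0 k := Finset.mem_sdiff.2 ⟨Finset.mem_filter.2 ⟨hy, hex⟩, hc⟩
    rw [hstopk] at this
    exact absurd this (Finset.notMem_empty y)
  have hinC1 : ∀ x ∈ X, x ∉ M.image Prod.fst → x ∈ (cumL G' Y' M D0 k).1 := by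
    intro x hxX hxM
    exact (cum_mono G' Y' M D0 (Nat.zero_le k)).1 (Finset.mem_sdiff.2 ⟨hxX, hxM⟩)
  have hYsub : Y' ⊆ (cumL G' Y' M D0 k).2 := by
    by_contra hc
    obtain ⟨w, hwY', hwC⟩ := Finset.not_subset.1 hc
    set M' := M.filter (fun p => p.2 ∉ (cumL G' Y' M D0 k).2) with hM'def
    have hM'M : M' ⊆ M := Finset.filter_subset _ _
    have hM'Bip : IsBipMatching G' X Y M' := by
      constructor
      · intro p hp
        have := hM.1 p (hM'M hp)
        exact ⟨this.1, hY'Y this.2.1, this.2.2⟩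
      · intro p hp q hq hpq
        exact hM.2 p (hM'M hp) q (hM'M hq) hpq
    have hne' : M'.Nonempty := by
      obtain ⟨x, hxX, hadjw⟩ := (hY'mem w).1 hwY'
      by_cases hxM : x ∈ M.image Prod.fst
      · obtain ⟨q, hq, rfl⟩ := Finset.mem_image.1 hxM
        by_cases hq2 : q.2 ∈ (cumL G' Y' M D0 k).2
        · exact absurd (hclosed w hwY' ⟨q.1, partner_mem G' Y' M D0 k q hq hq2, hadjw⟩) hwC
        · exact ⟨q, Finset.mem_filter.2 ⟨hq, hq2⟩⟩
      · exact absurd (hclosed w hwY' ⟨x, hinC1 x hxX hxM, hadjw⟩) hwC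
    have hEF' : EnvyFree G' X M' := by
      intro x hxX hxM' y hyM' hadjxy
      obtain ⟨q', hq', rfl⟩ := Finset.mem_image.1 hyM'
      have hq'2 := (Finset.mem_filter.1 hq').2
      have hq'Y' : q'.2 ∈ Y' := (hM.1 q' (hM'M hq')).2.1
      by_cases hxM : x ∈ M.image Prod.fst
      · obtain ⟨q, hq, rfl⟩ := Finset.mem_image.1 hxM
        by_cases hq2 : q.2 ∈ (cumL G' Y' M D0 k).2
        · exact hq'2 (hclosed q'.2 hq'Y' ⟨q.1, partner_mem G' Y' M D0 k q hq hq2, hadjxy⟩)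
        · exact hxM' (Finset.mem_image.2 ⟨q, Finset.mem_filter.2 ⟨hq, hq2⟩, rfl⟩)
      · exact hq'2 (hclosed q'.2 hq'Y' ⟨x, hinC1 x hxX hxM, hadjxy⟩)
    exact h ⟨M', hM'Bip, hne', hEF'⟩
  have hYeq : Y' = (cumL G' Y' M D0 k).2 :=
    Finset.Subset.antisymm hYsub (cum2_sub G' Y' M D0 k)
  -- the construction
  set U := (Finset.Icc 1 k).biUnion (fun j => nD G' Y' M D0 (j - 1)) with hU
  set A : ℕ → Finset V := fun i => if i = 0 then X \ U else nD G' Y' M D0 (i - 1) with hA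
  set B : ℕ → Finset V := fun i => nE G' Y' M D0 (i - 1) with hB
  have hnDX : ∀ j, nD G' Y' M D0 j ⊆ X := by
    intro j x hx
    obtain ⟨p, hp, rfl⟩ := Finset.mem_image.1 (nD_sub G' Y' M D0 j hx)
    exact hM1X p hp
  have hnEd : ∀ a b, a ≠ b → Disjoint (nE G' Y' M D0 a) (nE G' Y' M D0 b) := by
    have key : ∀ a b, a < b → Disjoint (nE G' Y' M D0 a) (nE G' Y' M D0 b) := by
      intro a b hab
      have h1 : nE G' Y' M D0 a ⊆ (cumL G' Y' M D0 b).2 := by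
        intro y hy
        have h2 : y ∈ (cumL G' Y' M D0 (a+1)).2 := by
          rw [cumL_succ]; exact Finset.mem_union_right _ hy
        exact (cum_mono G' Y' M D0 (by omega)).2 h2
      exact Finset.disjoint_of_subset_left h1 (nE_disj_cum G' Y' M D0 b).symm
    intro a b hab
    rcases lt_or_gt_of_ne hab with hlt | hgt
    · exact key a b hlt
    · exact (key b a hgt).symm
  have hnDd : ∀ a b, a ≠ b → Disjoint (nD G' Y' M D0 a) (nD G' Y' M D0 b) := by
    intro a b hab
    rw [Finset.disjoint_left]
    intro x hxa hxb
    obtain ⟨p, hpf, rfl⟩ := Finset.mem_image.1 hxa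
    obtain ⟨q, hqf, hq1⟩ := Finset.mem_image.1 hxb
    have hp := Finset.mem_filter.1 hpf
    have hq := Finset.mem_filter.1 hqf
    have hpq : p = q := by
      by_contra hne
      exact (hM.2 p hp.1 q hq.1 hne).1 hq1.symm
    subst hpq
    exact Finset.disjoint_left.1 (hnEd a b hab) hp.2 hq.2
  have hAmem : ∀ i, i ≠ 0 → ∀ x, (x ∈ A i ↔ ∃ p ∈ M, p.2 ∈ nE G' Y' M D0 (i-1) ∧ p.1 = x) := by
    intro i hi0 x
    simp only [hA, if_neg hi0, nD, Finset.mem_image, Finset.mem_filter]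
    constructor
    · rintro ⟨p, ⟨hp, hp2⟩, rfl⟩; exact ⟨p, hp, hp2, rfl⟩
    · rintro ⟨p, hp, hp2, rfl⟩; exact ⟨p, ⟨hp, hp2⟩, rfl⟩
  refine ⟨k, by omega, A, B, ?_, ?_, ?_, ?_, ?_, ?_⟩
  · -- A pairwise disjoint
    have hA0d : ∀ j, j ≠ 0 → j ≤ k → Disjoint (A 0) (A j) := by
      intro j hj0 hjk
      simp only [hA, if_pos rfl, if_neg hj0]
      rw [Finset.disjoint_left]
      intro x hx hx2
      exact (Finset.mem_sdiff.1 hx).2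
        (Finset.mem_biUnion.2 ⟨j, Finset.mem_Icc.2 ⟨by omega, hjk⟩, hx2⟩)
    intro i hi j hj hij
    rw [Finset.mem_range] at hi hj
    rcases Nat.eq_zero_or_pos i with rfl | hi0
    · exact hA0d j (fun hc => hij hc.symm) (by omega)
    rcases Nat.eq_zero_or_pos j with rfl | hj0
    · exact (hA0d i (by omega) (by omega)).symm
    · have e1 : A i = nD G' Y' M D0 (i-1) := by simp only [hA, if_neg (by omega : i ≠ 0)]
      have e2 : A j = nD G' Y' M D0 (j-1) := by simp only [hA, if_neg (by omega : j ≠ 0)]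
      rw [e1, e2]
      exact hnDd _ _ (by omega)
  · -- B pairwise disjoint
    intro i hi j hj hij
    rw [Finset.mem_Icc] at hi hj
    exact hnEd _ _ (by omega)
  · -- X = biUnion A
    ext x
    simp only [Finset.mem_biUnion]
    constructor
    · intro hx
      by_cases hxU : x ∈ U
      · obtain ⟨j, hj, hxj⟩ := Finset.mem_biUnion.1 hxU
        rw [Finset.mem_Icc] at hj
        refine ⟨j, Finset.mem_range.2 (by omega), ?_⟩
        have e : A j = nD G' Y' M D0 (j-1) := by simp only [hA, if_neg (by omega : j ≠ 0)]
        rw [e]; exact hxj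
      · refine ⟨0, Finset.mem_range.2 (by omega), ?_⟩
        have e : A 0 = X \ U := by simp only [hA, if_pos rfl]
        rw [e]; exact Finset.mem_sdiff.2 ⟨hx, hxU⟩
    · rintro ⟨i, hi, hxi⟩
      by_cases hi0 : i = 0
      · subst hi0
        have e : A 0 = X \ U := by simp only [hA, if_pos rfl]
        rw [e] at hxi
        exact (Finset.mem_sdiff.1 hxi).1
      · have e : A i = nD G' Y' M D0 (i-1) := by simp only [hA, if_neg hi0]
        rw [e] at hxi
        exact hnDX _ hxi
  · -- Y' = biUnion B
    ext y
    constructor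
    · intro hy
      have hy2 : y ∈ (Finset.range k).biUnion (nE G' Y' M D0) := by
        rw [← cum2_eq_biUnion, ← hYeq]; exact hy
      obtain ⟨j, hj, hyj⟩ := Finset.mem_biUnion.1 hy2
      rw [Finset.mem_range] at hj
      refine Finset.mem_biUnion.2 ⟨j+1, Finset.mem_Icc.2 ⟨by omega, by omega⟩, ?_⟩
      have e : B (j+1) = nE G' Y' M D0 j := by simp only [hB, Nat.add_sub_cancel]
      rw [e]; exact hyj
    · intro hy
      obtain ⟨i, hi, hyi⟩ := Finset.mem_biUnion.1 hy
      rw [Finset.mem_Icc] at hi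
      have e : B i = nE G' Y' M D0 (i-1) := by simp only [hB]
      rw [e] at hyi
      have h2 : y ∈ (cumL G' Y' M D0 ((i-1)+1)).2 := by
        rw [cumL_succ]; exact Finset.mem_union_right _ hyi
      rw [hYeq]
      exact (cum_mono G' Y' M D0 (by omega)).2 h2
  · -- perfect matchings
    intro i hi
    rw [Finset.mem_Icc] at hi
    have hi0 : i ≠ 0 := by omega
    set f : V → V := fun x => if hx : ∃ y, (x, y) ∈ M then hx.choose else x with hf
    have hfM : ∀ x, (∃ y, (x, y) ∈ M) → (x, f x) ∈ M := by
      intro x hx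
      simp only [hf, dif_pos hx]
      exact hx.choose_spec
    have hfeq : ∀ p ∈ M, f p.1 = p.2 := by
      intro p hp
      have h1 : (p.1, f p.1) ∈ M := hfM p.1 ⟨p.2, hp⟩
      by_contra hne
      have hne2 : (p.1, f p.1) ≠ p := by
        intro hc
        exact hne (congrArg Prod.snd hc)
      exact (hM.2 _ h1 p hp hne2).1 rfl
    have hBe : B i = nE G' Y' M D0 (i-1) := by simp only [hB]
    refine ⟨f, ⟨?_, ?_, ?_⟩, ?_⟩
    · -- MapsTo
      intro x hx
      rw [Finset.mem_coe] at hx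
      obtain ⟨p, hp, hp2, rfl⟩ := (hAmem i hi0 x).1 hx
      rw [Finset.mem_coe, hBe, hfeq p hp]
      exact hp2
    · -- InjOn
      intro x hx x' hx' heq
      rw [Finset.mem_coe] at hx hx'
      obtain ⟨p, hp, hp2, rfl⟩ := (hAmem i hi0 x).1 hx
      obtain ⟨q, hq, hq2, rfl⟩ := (hAmem i hi0 x').1 hx'
      rw [hfeq p hp, hfeq q hq] at heq
      by_contra hne
      have hpq : p ≠ q := fun hc => hne (congrArg Prod.fst hc)
      exact (hM.2 p hp q hq hpq).2 heq
    · -- SurjOn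
      intro y hy
      rw [Finset.mem_coe, hBe] at hy
      have hyC : y ∈ (cumL G' Y' M D0 ((i-1)+1)).2 := by
        rw [cumL_succ]; exact Finset.mem_union_right _ hy
      have hyM : y ∈ M.image Prod.snd :=
        reached_matched G' Y' M D0 hM hD0 hmax ((i-1)+1) y hyC
      obtain ⟨q, hq, rfl⟩ := Finset.mem_image.1 hyM
      have hq1A : q.1 ∈ A i := (hAmem i hi0 q.1).2 ⟨q, hq, hy, rfl⟩
      exact ⟨q.1, Finset.mem_coe.2 hq1A, hfeq q hq⟩
    · -- adjacency
      intro x hx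
      obtain ⟨p, hp, hp2, rfl⟩ := (hAmem i hi0 x).1 hx
      rw [hfeq p hp]
      exact (hM.1 p hp).2.2
  · -- B i adjacent to A (i-1)
    intro i hi y hy
    rw [Finset.mem_Icc] at hi
    have hBe : B i = nE G' Y' M D0 (i-1) := by simp only [hB]
    rw [hBe] at hy
    have he := Finset.mem_sdiff.1 hy
    have he1 := Finset.mem_filter.1 he.1
    obtain ⟨x, hx, hadjx⟩ := he1.2
    by_cases hi1 : i = 1
    · subst hi1
      have hxD0 : x ∈ D0 := hx
      refine ⟨x, ?_, hadjx⟩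
      have e : A 0 = X \ U := by simp only [hA, if_pos rfl]
      rw [e]
      refine Finset.mem_sdiff.2 ⟨hD0X hxD0, ?_⟩
      intro hxU
      obtain ⟨j, _, hxj⟩ := Finset.mem_biUnion.1 hxU
      exact (Finset.mem_sdiff.1 hxD0).2 (nD_sub G' Y' M D0 _ hxj)
    · -- i ≥ 2
      have hii : i - 1 = (i - 2) + 1 := by omega
      rw [hii, cumL_succ] at hx
      rcases Finset.mem_union.1 hx with hx | hx
      · exfalso
        have hyY' : y ∈ Y' := he1.1
        have : y ∈ (cumL G' Y' M D0 ((i-2)+1)).2 := by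
          rw [cumL_succ]
          by_cases hc : y ∈ (cumL G' Y' M D0 (i-2)).2
          · exact Finset.mem_union_left _ hc
          · exact Finset.mem_union_right _
              (Finset.mem_sdiff.2 ⟨Finset.mem_filter.2 ⟨hyY', ⟨x, hx, hadjx⟩⟩, hc⟩)
        rw [← hii] at this
        exact he.2 this
      · refine ⟨x, ?_, hadjx⟩
        have e : A (i-1) = nD G' Y' M D0 (i-1-1) := by
          simp only [hA, if_neg (by omega : i - 1 ≠ 0)]
        rw [e, show i - 1 - 1 = i - 2 by omega]
        exact hx

/-- `G` admits a nonempty envy-free matching iff the bipartite graph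
`(X ⊔ N_G(X), E)` is not `Y`-path-saturated. -/
theorem nonempty_envy_free_iff [Fintype V] (G : SimpleGraph V) (X Y : Finset V)
    (hBip : IsBipartition G X Y) :
    (∃ M : Finset (V × V), IsBipMatching G X Y M ∧ M.Nonempty ∧ EnvyFree G X M) ↔
      ¬ YPathSaturated G X (Finset.univ.filter fun y => ∃ x ∈ X, G.Adj x y) := by
  constructor
  · rintro ⟨M, hM, hne, hEF⟩ hsat
    exact no_EFM_of_sat G X hsat M (fun p hp => ⟨(hM.1 p hp).1, (hM.1 p hp).2.2⟩)
      hM.2 hne hEF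
  · intro hns
    by_contra hno
    exact hns (sat_of_no_EFM hBip hno)
end

section
/- If a finite bipartite graph G = (X ⊔ Y, E) admits no matching that saturates every vertex of N_G(X), then G admits a nonempty envy-free matching. -/
attribute [local instance] Classical.propDecidable

variable {V : Type*}

/-- if `G` admits no matching saturating every vertex of `N_G(X)`,
then `G` admits a nonempty envy-free matching. -/
theorem nonempty_envy_free_of_no_neighborhood_saturating [Fintype V]
    (G : SimpleGraph V) (X Y : Finset V) (hBip : IsBipartition G X Y)
    (h : ¬ ∃ M : Finset (V × V), IsBipMatching G X Y M ∧
        (Finset.univ.filter fun y => ∃ x ∈ X, G.Adj x y) ⊆ M.image Prod.snd) :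
    ∃ M : Finset (V × V), IsBipMatching G X Y M ∧ M.Nonempty ∧ EnvyFree G X M := by
  classical
  obtain ⟨hdisj, -, hedge⟩ := hBip
  set NX : Finset V := Finset.univ.filter fun y => ∃ x ∈ X, G.Adj x y with hNXdef
  have hNXY : ∀ y ∈ NX, y ∈ Y := by
    intro y hy
    rw [hNXdef, Finset.mem_filter] at hy
    obtain ⟨-, x, hx, hadj⟩ := hy
    rcases hedge hadj with ⟨-, hy⟩ | ⟨hx', -⟩
    · exact hy
    · exact absurd hx' (Finset.disjoint_left.mp hdisj hx)
  -- Step 1: some Hall-violating subset of NX exists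
  have hviol : ∃ T ⊆ NX, (X.filter fun x => ∃ y ∈ T, G.Adj x y).card < T.card := by
    by_contra hc
    push_neg at hc
    apply h
    have hall : ∀ s : Finset {y // y ∈ NX},
        s.card ≤ (s.biUnion fun y => X.filter fun x => G.Adj x y.1).card := by
      intro s
      have h1 : s.biUnion (fun y => X.filter fun x => G.Adj x y.1)
          = X.filter fun x => ∃ y ∈ s.image Subtype.val, G.Adj x y := by
        ext x
        simp only [Finset.mem_biUnion, Finset.mem_filter, Finset.mem_image]
        constructor
        · rintro ⟨y, hy, hx, hadj⟩; exact ⟨hx, y.1, ⟨y, hy, rfl⟩, hadj⟩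
        · rintro ⟨hx, y, ⟨z, hz, rfl⟩, hadj⟩; exact ⟨z, hz, hx, hadj⟩
      rw [h1]
      have h2 := hc (s.image Subtype.val) (by
        intro y hy
        obtain ⟨z, _, rfl⟩ := Finset.mem_image.mp hy
        exact z.2)
      rwa [Finset.card_image_of_injective _ Subtype.val_injective] at h2
    obtain ⟨f, hfinj, hf⟩ :=
      (Finset.all_card_le_biUnion_card_iff_exists_injective
        (fun y : {y // y ∈ NX} => X.filter fun x => G.Adj x y.1)).mp hall
    refine ⟨NX.attach.image fun y => (f y, y.1), ⟨?_, ?_⟩, ?_⟩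
    · rintro p hp
      obtain ⟨y, -, rfl⟩ := Finset.mem_image.mp hp
      have := hf y
      rw [Finset.mem_filter] at this
      exact ⟨this.1, hNXY _ y.2, this.2⟩
    · rintro p hp q hq hpq
      obtain ⟨a, -, rfl⟩ := Finset.mem_image.mp hp
      obtain ⟨b, -, rfl⟩ := Finset.mem_image.mp hq
      have hab : a ≠ b := fun e => hpq (by rw [e])
      exact ⟨fun e => hab (hfinj e), fun e => hab (Subtype.ext e)⟩
    · intro y hy
      refine Finset.mem_image.mpr ⟨(f ⟨y, hy⟩, y), ?_, rfl⟩
      exact Finset.mem_image.mpr ⟨⟨y, hy⟩, Finset.mem_attach _ _, rfl⟩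
  -- Step 2: choose a minimal-cardinality violating set T
  set 𝒯 : Finset (Finset V) := NX.powerset.filter
    (fun T => (X.filter fun x => ∃ y ∈ T, G.Adj x y).card < T.card) with h𝒯
  have h𝒯ne : 𝒯.Nonempty := by
    obtain ⟨T, hT1, hT2⟩ := hviol
    exact ⟨T, Finset.mem_filter.mpr ⟨Finset.mem_powerset.mpr hT1, hT2⟩⟩
  obtain ⟨T, hT𝒯, hTmin⟩ := Finset.exists_min_image 𝒯 Finset.card h𝒯ne
  rw [h𝒯, Finset.mem_filter, Finset.mem_powerset] at hT𝒯
  obtain ⟨hTNX, hTviol⟩ := hT𝒯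
  set S : Finset V := X.filter fun x => ∃ y ∈ T, G.Adj x y with hSdef
  -- every element of S has a neighbor in T; every element of T has a neighbor in X, which is in S
  have hSne : S.Nonempty := by
    have hTne : T.Nonempty := Finset.card_pos.mp (by omega)
    obtain ⟨t, ht⟩ := hTne
    have := hTNX ht
    rw [hNXdef, Finset.mem_filter] at this
    obtain ⟨-, x, hx, hadj⟩ := this
    exact ⟨x, Finset.mem_filter.mpr ⟨hx, t, ht, hadj⟩⟩
  -- Step 3: Hall's condition from S into T
  have hall : ∀ s : Finset {x // x ∈ S},
      s.card ≤ (s.biUnion fun x => T.filter fun y => G.Adj x.1 y).card := by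
    intro s
    by_contra hc
    push_neg at hc
    set U : Finset V := s.biUnion (fun x => T.filter fun y => G.Adj x.1 y) with hUdef
    have hUT : U ⊆ T := by
      intro y hy
      obtain ⟨x, -, hy⟩ := Finset.mem_biUnion.mp hy
      exact (Finset.mem_filter.mp hy).1
    have hsne : s.Nonempty := Finset.card_pos.mp (by omega)
    have hUne : U.Nonempty := by
      obtain ⟨a, ha⟩ := hsne
      obtain ⟨-, y, hyT, hadj⟩ := Finset.mem_filter.mp a.2
      exact ⟨y, Finset.mem_biUnion.mpr ⟨a, ha, Finset.mem_filter.mpr ⟨hyT, hadj⟩⟩⟩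
    set S' : Finset V := s.image Subtype.val with hS'def
    have hS'card : S'.card = s.card := Finset.card_image_of_injective _ Subtype.val_injective
    have hS'S : S' ⊆ S := by
      intro x hx
      obtain ⟨a, -, rfl⟩ := Finset.mem_image.mp hx
      exact a.2
    set T'' : Finset V := T \ U with hT''def
    have hsub : (X.filter fun x => ∃ y ∈ T'', G.Adj x y) ⊆ S \ S' := by
      intro x hx
      rw [Finset.mem_filter] at hx
      obtain ⟨hxX, y, hyT'', hadj⟩ := hx
      have hyT : y ∈ T := (Finset.mem_sdiff.mp hyT'').1
      have hyU : y ∉ U := (Finset.mem_sdiff.mp hyT'').2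
      refine Finset.mem_sdiff.mpr ⟨Finset.mem_filter.mpr ⟨hxX, y, hyT, hadj⟩, ?_⟩
      intro hxS'
      obtain ⟨a, ha, hax⟩ := Finset.mem_image.mp hxS'
      exact hyU (Finset.mem_biUnion.mpr ⟨a, ha, Finset.mem_filter.mpr ⟨hyT, hax ▸ hadj⟩⟩)
    have hc1 : (X.filter fun x => ∃ y ∈ T'', G.Adj x y).card ≤ (S \ S').card :=
      Finset.card_le_card hsub
    have hc2 : (S \ S').card + S'.card = S.card := Finset.card_sdiff_add_card_eq_card hS'S
    have hc3 : T''.card + U.card = T.card :=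
      Finset.card_sdiff_add_card_eq_card (by intro y hy; exact hUT hy)
    have hc4 : 1 ≤ U.card := Finset.card_pos.mpr hUne
    have hT''viol : (X.filter fun x => ∃ y ∈ T'', G.Adj x y).card < T''.card := by omega
    have hT''𝒯 : T'' ∈ 𝒯 := by
      rw [h𝒯, Finset.mem_filter, Finset.mem_powerset]
      exact ⟨fun y hy => hTNX ((Finset.mem_sdiff.mp hy).1), hT''viol⟩
    have := hTmin T'' hT''𝒯
    omega
  obtain ⟨g, hginj, hg⟩ :=
    (Finset.all_card_le_biUnion_card_iff_exists_injective
      (fun x : {x // x ∈ S} => T.filter fun y => G.Adj x.1 y)).mp hall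
  refine ⟨S.attach.image fun x => (x.1, g x), ⟨?_, ?_⟩, ?_, ?_⟩
  · rintro p hp
    obtain ⟨a, -, rfl⟩ := Finset.mem_image.mp hp
    have hga := hg a
    rw [Finset.mem_filter] at hga
    exact ⟨(Finset.mem_filter.mp a.2).1, hNXY _ (hTNX hga.1), hga.2⟩
  · rintro p hp q hq hpq
    obtain ⟨a, -, rfl⟩ := Finset.mem_image.mp hp
    obtain ⟨b, -, rfl⟩ := Finset.mem_image.mp hq
    have hab : a ≠ b := fun e => hpq (by rw [e])
    exact ⟨fun e => hab (Subtype.ext e), fun e => hab (hginj e)⟩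
  · obtain ⟨x, hx⟩ := hSne
    exact ⟨(x, g ⟨x, hx⟩), Finset.mem_image.mpr ⟨⟨x, hx⟩, Finset.mem_attach _ _, rfl⟩⟩
  · intro x hxX hxnot y hy hadj
    apply hxnot
    have hxS : x ∈ S := by
      obtain ⟨p, hp, rfl⟩ := Finset.mem_image.mp hy
      obtain ⟨a, -, rfl⟩ := Finset.mem_image.mp hp
      have hga := hg a
      rw [Finset.mem_filter] at hga
      exact Finset.mem_filter.mpr ⟨hxX, g a, hga.1, hadj⟩
    refine Finset.mem_image.mpr ⟨(x, g ⟨x, hxS⟩), ?_, rfl⟩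
    exact Finset.mem_image.mpr ⟨⟨x, hxS⟩, Finset.mem_attach _ _, rfl⟩
end

section
/- If a finite bipartite graph G = (X ⊔ Y, E) satisfies |N_G(X)| ≥ |X| ≥ 1, then G admits a nonempty envy-free matching. -/
attribute [local instance] Classical.propDecidable

variable {V : Type*}

lemma aux_envy_free [Fintype V] (G : SimpleGraph V) :
    ∀ n (X' Y' : Finset V), X'.card ≤ n → X'.Nonempty →
      X'.card ≤ (Y'.filter fun y => ∃ x ∈ X', G.Adj x y).card →
      ∃ M, IsBipMatching G X' Y' M ∧ M.Nonempty ∧ EnvyFree G X' M := by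
  intro n
  induction n with
  | zero =>
    intro X' Y' hc hne _
    simp [Finset.card_eq_zero, Nat.le_zero] at hc
    simp [hc] at hne
  | succ n ih =>
    intro X' Y' hc hne hN
    by_cases hHall : ∀ S ⊆ X', S.card ≤ (Y'.filter fun y => ∃ x ∈ S, G.Adj x y).card
    · -- Hall's condition holds: perfect matching of X', vacuously envy-free
      have hall2 : ∀ s : Finset {x // x ∈ X'},
          s.card ≤ (s.biUnion (fun x => Y'.filter fun y => G.Adj x.1 y)).card := by
        intro s
        have h1 : s.card = (s.image Subtype.val).card :=
          (Finset.card_image_of_injective s Subtype.val_injective).symm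
        have h2 : s.image Subtype.val ⊆ X' := by
          intro x hx
          simp only [Finset.mem_image] at hx
          obtain ⟨⟨x, hx'⟩, _, rfl⟩ := hx
          exact hx'
        refine h1 ▸ le_trans (hHall _ h2) (Finset.card_le_card ?_)
        intro y hy
        simp only [Finset.mem_filter, Finset.mem_image] at hy
        obtain ⟨hy1, x, ⟨⟨x', hx'⟩, hxs, rfl⟩, hadj⟩ := hy
        exact Finset.mem_biUnion.2 ⟨⟨x', hx'⟩, hxs, Finset.mem_filter.2 ⟨hy1, hadj⟩⟩
      obtain ⟨f, hfinj, hf⟩ := (Finset.all_card_le_biUnion_card_iff_exists_injective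
          (fun x : {x // x ∈ X'} => Y'.filter fun y => G.Adj x.1 y)).1 hall2
      refine ⟨X'.attach.image (fun x => (x.1, f x)), ⟨?_, ?_⟩, ?_, ?_⟩
      · rintro p hp
        simp only [Finset.mem_image, Finset.mem_attach, true_and] at hp
        obtain ⟨x, rfl⟩ := hp
        have := hf x
        simp only [Finset.mem_filter] at this
        exact ⟨x.2, this.1, this.2⟩
      · rintro p hp q hq hpq
        simp only [Finset.mem_image, Finset.mem_attach, true_and] at hp hq
        obtain ⟨x, rfl⟩ := hp
        obtain ⟨y, rfl⟩ := hq
        have hxy : x ≠ y := by rintro rfl; exact hpq rfl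
        exact ⟨fun h => hxy (Subtype.ext h), fun h => hxy (hfinj h)⟩
      · obtain ⟨x, hx⟩ := hne
        exact ⟨(x, f ⟨x, hx⟩), Finset.mem_image.2 ⟨⟨x, hx⟩, Finset.mem_attach _ _, rfl⟩⟩
      · intro x hx hxm y _ _
        exact absurd (Finset.mem_image.2 ⟨(x, f ⟨x, hx⟩),
          Finset.mem_image.2 ⟨⟨x, hx⟩, Finset.mem_attach _ _, rfl⟩, rfl⟩) hxm
    · -- A deficient set S exists: remove S and N(S) and recurse
      push_neg at hHall
      obtain ⟨S, hSX, hSdef⟩ := hHall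
      have hSne : 1 ≤ S.card := by omega
      have hSc : S.card ≤ X'.card := Finset.card_le_card hSX
      have hSne' : S ≠ X' := by
        rintro rfl
        omega
      set NS := Y'.filter (fun y => ∃ x ∈ S, G.Adj x y) with hNS
      set X'' := X' \ S with hX''
      set Y'' := Y' \ NS with hY''
      have hX''c : X''.card = X'.card - S.card := Finset.card_sdiff_of_subset hSX
      have hSlt : S.card < X'.card :=
        Finset.card_lt_card (lt_of_le_of_ne hSX hSne')
      -- key counting
      have hsub : (Y'.filter fun y => ∃ x ∈ X', G.Adj x y) ⊆
          (Y''.filter fun y => ∃ x ∈ X'', G.Adj x y) ∪ NS := by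
        intro y hy
        simp only [Finset.mem_filter] at hy
        obtain ⟨hyY, x, hxX, hadj⟩ := hy
        by_cases hyNS : y ∈ NS
        · exact Finset.mem_union_right _ hyNS
        · refine Finset.mem_union_left _ (Finset.mem_filter.2
            ⟨Finset.mem_sdiff.2 ⟨hyY, hyNS⟩, x, Finset.mem_sdiff.2 ⟨hxX, ?_⟩, hadj⟩)
          intro hxS
          exact hyNS (Finset.mem_filter.2 ⟨hyY, x, hxS, hadj⟩)
      have hcount : X'.card ≤
          (Y''.filter fun y => ∃ x ∈ X'', G.Adj x y).card + NS.card := by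
        calc X'.card ≤ (Y'.filter fun y => ∃ x ∈ X', G.Adj x y).card := hN
          _ ≤ ((Y''.filter fun y => ∃ x ∈ X'', G.Adj x y) ∪ NS).card :=
              Finset.card_le_card hsub
          _ ≤ _ := Finset.card_union_le _ _
      obtain ⟨M, hM, hMne, hEF⟩ := ih X'' Y'' (by omega)
        (Finset.card_pos.1 (by omega)) (by omega)
      refine ⟨M, ⟨?_, hM.2⟩, hMne, ?_⟩
      · intro p hp
        obtain ⟨h1, h2, h3⟩ := hM.1 p hp
        exact ⟨(Finset.sdiff_subset) h1, (Finset.sdiff_subset) h2, h3⟩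
      · intro x hx hxm y hy hadj
        by_cases hxX'' : x ∈ X''
        · exact hEF x hxX'' hxm y hy hadj
        · have hxS : x ∈ S := by
            by_contra h
            exact hxX'' (Finset.mem_sdiff.2 ⟨hx, h⟩)
          simp only [Finset.mem_image] at hy
          obtain ⟨p, hp, rfl⟩ := hy
          have hy'' : p.2 ∈ Y'' := (hM.1 p hp).2.1
          have := Finset.mem_sdiff.1 hy''
          exact this.2 (Finset.mem_filter.2 ⟨this.1, x, hxS, hadj⟩)


/-- if `|N_G(X)| ≥ |X| ≥ 1` then `G` admits a nonempty envy-free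
matching. -/
theorem nonempty_envy_free_of_card_le [Fintype V]
    (G : SimpleGraph V) (X Y : Finset V) (hBip : IsBipartition G X Y)
    (hX : 1 ≤ X.card)
    (hN : X.card ≤ (Finset.univ.filter fun y => ∃ x ∈ X, G.Adj x y).card) :
    ∃ M : Finset (V × V), IsBipMatching G X Y M ∧ M.Nonempty ∧ EnvyFree G X M := by
  obtain ⟨hdisj, -, hedge⟩ := hBip
  have hfilt : (Finset.univ.filter fun y => ∃ x ∈ X, G.Adj x y)
      ⊆ (Y.filter fun y => ∃ x ∈ X, G.Adj x y) := by
    intro y hy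
    simp only [Finset.mem_filter, Finset.mem_univ, true_and] at hy ⊢
    obtain ⟨x, hx, hadj⟩ := hy
    refine ⟨?_, x, hx, hadj⟩
    rcases hedge hadj with ⟨-, h⟩ | ⟨h, -⟩
    · exact h
    · exact absurd h (Finset.disjoint_left.1 hdisj hx)
  exact aux_envy_free G X.card X Y le_rfl (Finset.card_pos.1 hX)
    (le_trans hN (Finset.card_le_card hfilt))
end

section
/- If a finite bipartite graph G = (X ⊔ Y, E) is Y-path-saturated, then the only envy-free matching in G is the empty matching. -/
attribute [local instance] Classical.propDecidable

variable {V : Type*}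

/-- in a `Y`-path-saturated finite bipartite graph, the only envy-free
matching is the empty matching. -/
theorem envy_free_empty_of_path_saturated [Fintype V]
    (G : SimpleGraph V) (X Y : Finset V) (hBip : IsBipartition G X Y)
    (hYPS : YPathSaturated G X Y) :
    ∀ M : Finset (V × V), IsBipMatching G X Y M → EnvyFree G X M → M = ∅ := by
  obtain ⟨k, hk, A, B, hAdisj, hBdisj, hX, hY, hPM, hAdjY⟩ := hYPS
  intro M hM hEF
  set XM := M.image Prod.fst with hXMdef
  set YM := M.image Prod.snd with hYMdef
  have hfstX : ∀ p ∈ M, p.1 ∈ X := fun p hp => (hM.1 p hp).1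
  have hsndY : ∀ p ∈ M, p.2 ∈ Y := fun p hp => (hM.1 p hp).2.1
  have hcardXM : XM.card = M.card := Finset.card_image_of_injOn (by
    intro p hp q hq h
    by_contra hne
    exact (hM.2 p hp q hq hne).1 h)
  have hcardYM : YM.card = M.card := Finset.card_image_of_injOn (by
    intro p hp q hq h
    by_contra hne
    exact (hM.2 p hp q hq hne).2 h)
  have hXin : ∀ i ∈ Finset.range (k+1), ∀ x ∈ A i, x ∈ X := by
    intro i hi x hx
    rw [hX]
    exact Finset.mem_biUnion.mpr ⟨i, hi, hx⟩
  -- per-index cardinality comparison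
  have hle : ∀ i ∈ Finset.Icc 1 k, (B i ∩ YM).card ≤ (A i ∩ XM).card := by
    intro i hi
    obtain ⟨f, hbij, hadjf⟩ := hPM i hi
    have hiR : i ∈ Finset.range (k+1) := by
      simp only [Finset.mem_Icc] at hi
      simp only [Finset.mem_range]
      omega
    have hcardAB : (A i).card = (B i).card := by
      have h1 : (f '' (A i : Set V)) = (B i : Set V) := hbij.image_eq
      have h2 : ((B i : Set V)).ncard = ((A i : Set V)).ncard := by
        rw [← h1, Set.ncard_image_of_injOn hbij.injOn]
      simpa [Set.ncard_coe_finset] using h2.symm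
    have hmaps : ∀ x ∈ A i \ XM, f x ∈ B i \ YM := by
      intro x hx
      rw [Finset.mem_sdiff] at hx
      rw [Finset.mem_sdiff]
      refine ⟨hbij.mapsTo hx.1, ?_⟩
      intro hfY
      exact hEF x (hXin i hiR x hx.1) hx.2 (f x) hfY (hadjf x hx.1)
    have hinj : Set.InjOn f ((A i \ XM : Finset V) : Set V) := by
      apply hbij.injOn.mono
      intro x hx
      simp only [Finset.coe_sdiff, Set.mem_diff] at hx
      exact hx.1
    have hc : (A i \ XM).card ≤ (B i \ YM).card :=
      Finset.card_le_card_of_injOn f hmaps hinj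
    have e1 := Finset.card_sdiff_add_card_inter (A i) XM
    have e2 := Finset.card_sdiff_add_card_inter (B i) YM
    omega
  -- sum decompositions
  have hsumY : YM.card = ∑ i ∈ Finset.Icc 1 k, (B i ∩ YM).card := by
    have hYMeq : YM = (Finset.Icc 1 k).biUnion (fun i => B i ∩ YM) := by
      ext y
      simp only [Finset.mem_biUnion, Finset.mem_inter]
      constructor
      · intro hy
        have hyY : y ∈ Y := by
          obtain ⟨p, hp, rfl⟩ := Finset.mem_image.mp hy
          exact hsndY p hp
        rw [hY] at hyY
        obtain ⟨i, hi, hyB⟩ := Finset.mem_biUnion.mp hyY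
        exact ⟨i, hi, hyB, hy⟩
      · rintro ⟨i, _, _, hy⟩
        exact hy
    conv_lhs => rw [hYMeq]
    exact Finset.card_biUnion (fun i hi j hj hij =>
      (hBdisj i hi j hj hij).mono Finset.inter_subset_left Finset.inter_subset_left)
  have hsplit : Finset.range (k+1) = insert 0 (Finset.Icc 1 k) := by
    ext n
    simp only [Finset.mem_range, Finset.mem_insert, Finset.mem_Icc]
    omega
  have hsumX : XM.card = (A 0 ∩ XM).card + ∑ i ∈ Finset.Icc 1 k, (A i ∩ XM).card := by
    have hXMeq : XM = (Finset.range (k+1)).biUnion (fun i => A i ∩ XM) := by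
      ext x
      simp only [Finset.mem_biUnion, Finset.mem_inter]
      constructor
      · intro hx
        have hxX : x ∈ X := by
          obtain ⟨p, hp, rfl⟩ := Finset.mem_image.mp hx
          exact hfstX p hp
        rw [hX] at hxX
        obtain ⟨i, hi, hxA⟩ := Finset.mem_biUnion.mp hxX
        exact ⟨i, hi, hxA, hx⟩
      · rintro ⟨i, _, _, hx⟩
        exact hx
    conv_lhs => rw [hXMeq]
    rw [Finset.card_biUnion (fun i hi j hj hij =>
      (hAdisj i hi j hj hij).mono Finset.inter_subset_left Finset.inter_subset_left),
      hsplit, Finset.sum_insert (by simp)]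
  have hsumle : ∑ i ∈ Finset.Icc 1 k, (B i ∩ YM).card ≤
      ∑ i ∈ Finset.Icc 1 k, (A i ∩ XM).card := Finset.sum_le_sum hle
  have hA0 : (A 0 ∩ XM).card = 0 := by omega
  have hsumeq : ∑ i ∈ Finset.Icc 1 k, (B i ∩ YM).card =
      ∑ i ∈ Finset.Icc 1 k, (A i ∩ XM).card := by omega
  have heq : ∀ i ∈ Finset.Icc 1 k, (B i ∩ YM).card = (A i ∩ XM).card :=
    (Finset.sum_eq_sum_iff_of_le hle).mp hsumeq
  -- main induction
  have key : ∀ i, i ∈ Finset.range (k+1) → A i ∩ XM = ∅ := by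
    intro i
    induction i using Nat.strong_induction_on with
    | _ i ih =>
      intro hi
      rcases Nat.eq_zero_or_pos i with rfl | hpos
      · exact Finset.card_eq_zero.mp hA0
      · have hiIcc : i ∈ Finset.Icc 1 k := by
          simp only [Finset.mem_range] at hi
          simp only [Finset.mem_Icc]
          omega
        have hB : B i ∩ YM = ∅ := by
          rw [Finset.eq_empty_iff_forall_notMem]
          intro y hy
          rw [Finset.mem_inter] at hy
          obtain ⟨x, hxA, hxy⟩ := hAdjY i hiIcc y hy.1
          have him1 : i - 1 ∈ Finset.range (k+1) := by
            simp only [Finset.mem_range] at hi ⊢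
            omega
          have hxnot : x ∉ XM := by
            intro hmem
            have h0 := ih (i-1) (by omega) him1
            rw [Finset.eq_empty_iff_forall_notMem] at h0
            exact h0 x (Finset.mem_inter.mpr ⟨hxA, hmem⟩)
          exact hEF x (hXin _ him1 x hxA) hxnot y hy.2 hxy
        have h1 := heq i hiIcc
        rw [hB] at h1
        simp only [Finset.card_empty] at h1
        exact Finset.card_eq_zero.mp h1.symm
  rw [Finset.eq_empty_iff_forall_notMem]
  intro p hp
  have hx1 : p.1 ∈ XM := Finset.mem_image.mpr ⟨p, hp, rfl⟩
  have hxX : p.1 ∈ X := hfstX p hp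
  rw [hX] at hxX
  obtain ⟨i, hi, hxA⟩ := Finset.mem_biUnion.mp hxX
  have h0 := key i hi
  rw [Finset.eq_empty_iff_forall_notMem] at h0
  exact h0 p.1 (Finset.mem_inter.mpr ⟨hxA, hx1⟩)
end

section
/- Let G = (X ⊔ Y, E) be a finite bipartite graph and let X = X_S ⊔ X_L, Y = Y_S ⊔ Y_L be the unique partitions satisfying: (a) there are no edges between X_S and Y_L; (b) G[X_S, Y_S] is Y-path-saturated; (c) G[X_L, Y_L] admits a matching saturating X_L. Then the maximum cardinality of an envy-free matching in G equals |X_L|. -/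
attribute [local instance] Classical.propDecidable

variable {V : Type*}

/-- if `X = X_S ⊔ X_L` and `Y = Y_S ⊔ Y_L` are the (unique) partitions
satisfying (a), (b), (c), then the maximum cardinality of an envy-free matching in `G`
equals `|X_L|`. -/
theorem max_envy_free_card [Fintype V] (G : SimpleGraph V) (X Y : Finset V)
    (hBip : IsBipartition G X Y)
    (XS XL YS YL : Finset V)
    (hXdisj : Disjoint XS XL) (hXunion : XS ∪ XL = X)
    (hYdisj : Disjoint YS YL) (hYunion : YS ∪ YL = Y)
    (ha : ∀ x ∈ XS, ∀ y ∈ YL, ¬ G.Adj x y)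
    (hb : YPathSaturated G XS YS)
    (hc : ∃ M : Finset (V × V), IsBipMatching G XL YL M ∧ XL ⊆ M.image Prod.fst) :
    (∃ M : Finset (V × V), IsBipMatching G X Y M ∧ EnvyFree G X M ∧
        M.card = XL.card) ∧
    ∀ M : Finset (V × V), IsBipMatching G X Y M → EnvyFree G X M →
      M.card ≤ XL.card := by

  obtain ⟨hXY, hcover, hadj⟩ := hBip
  have hXLX : XL ⊆ X := hXunion ▸ Finset.subset_union_right
  have hXSX : XS ⊆ X := hXunion ▸ Finset.subset_union_left
  have hYLY : YL ⊆ Y := hYunion ▸ Finset.subset_union_right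
  have hYSY : YS ⊆ Y := hYunion ▸ Finset.subset_union_left
  constructor
  · obtain ⟨M, ⟨hM1, hM2⟩, hMsat⟩ := hc
    have hfst : M.image Prod.fst = XL := by
      apply Finset.Subset.antisymm _ hMsat
      intro x hx
      obtain ⟨p, hp, rfl⟩ := Finset.mem_image.mp hx
      exact (hM1 p hp).1
    refine ⟨M, ⟨?_, hM2⟩, ?_, ?_⟩
    · intro p hp
      obtain ⟨h1, h2, h3⟩ := hM1 p hp
      exact ⟨hXLX h1, hYLY h2, h3⟩
    · intro x hx hxm y hy hadjxy
      rw [hfst] at hxm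
      have hxS : x ∈ XS := by
        have hx' : x ∈ XS ∪ XL := by rw [hXunion]; exact hx
        rcases Finset.mem_union.mp hx' with h | h
        · exact h
        · exact absurd h hxm
      obtain ⟨p, hp, rfl⟩ := Finset.mem_image.mp hy
      exact ha x hxS p.2 (hM1 p hp).2.1 hadjxy
    · rw [← hfst]
      exact (Finset.card_image_of_injOn (fun p hp q hq hpq => by
        by_contra h
        exact (hM2 p hp q hq h).1 hpq)).symm
  · intro M hM hEF
    obtain ⟨hM1, hM2⟩ := hM
    have hfstinj : Set.InjOn Prod.fst (M : Set (V × V)) := by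
      intro p hp q hq hpq
      by_contra h
      exact (hM2 p hp q hq h).1 hpq
    have hsndinj : Set.InjOn Prod.snd (M : Set (V × V)) := by
      intro p hp q hq hpq
      by_contra h
      exact (hM2 p hp q hq h).2 hpq
    obtain ⟨k, hk1, A, B, hAdisj, hBdisj, hXSeq, hYSeq, hPM, hPen⟩ := hb
    have hAsubXS : ∀ i, i ≤ k → A i ⊆ XS := by
      intro i hi
      rw [hXSeq]
      intro x hx
      exact Finset.mem_biUnion.mpr ⟨i, Finset.mem_range.mpr (by omega), hx⟩
    classical
    set E0 := M.filter (fun p => p.2 ∈ YS) with hE0def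
    set S := E0.image Prod.snd with hSdef
    set N := E0.image Prod.fst with hNdef
    have hE0sub : E0 ⊆ M := Finset.filter_subset _ _
    have hSYS : S ⊆ YS := by
      intro y hy
      obtain ⟨p, hp, rfl⟩ := Finset.mem_image.mp hy
      exact (Finset.mem_filter.mp hp).2
    have hcardS : S.card = E0.card :=
      Finset.card_image_of_injOn (hsndinj.mono (by exact_mod_cast hE0sub))
    have hcardN : N.card = E0.card :=
      Finset.card_image_of_injOn (hfstinj.mono (by exact_mod_cast hE0sub))
    -- a matched XS vertex lies in N
    have hXSmatched : ∀ x ∈ XS, x ∈ M.image Prod.fst → x ∈ N := by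
      intro x hx hxm
      obtain ⟨p, hp, rfl⟩ := Finset.mem_image.mp hxm
      obtain ⟨_, hpY, hpadj⟩ := hM1 p hp
      have hpYS : p.2 ∈ YS := by
        have h' : p.2 ∈ YS ∪ YL := by rw [hYunion]; exact hpY
        rcases Finset.mem_union.mp h' with h | h
        · exact h
        · exact absurd hpadj (ha _ hx _ h)
      exact Finset.mem_image_of_mem _ (Finset.mem_filter.mpr ⟨hp, hpYS⟩)
    -- envy-free key step
    have hkey : ∀ x ∈ XS, ∀ y ∈ S, G.Adj x y → x ∈ N := by
      intro x hx y hy hxy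
      by_cases hm : x ∈ M.image Prod.fst
      · exact hXSmatched x hx hm
      · have hyM : y ∈ M.image Prod.snd := by
          obtain ⟨p, hp, rfl⟩ := Finset.mem_image.mp hy
          exact Finset.mem_image_of_mem _ (hE0sub hp)
        exact absurd hxy (hEF x (hXSX hx) hm y hyM)
    -- the structural matchings, as total functions
    have hPM' : ∀ i : ℕ, ∃ f : V → V,
        i ∈ Finset.Icc 1 k → (Set.BijOn f (A i) (B i) ∧ ∀ x ∈ A i, G.Adj x (f x)) := by
      intro i
      by_cases h : i ∈ Finset.Icc 1 k
      · obtain ⟨f, hf⟩ := hPM i h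
        exact ⟨f, fun _ => hf⟩
      · exact ⟨id, fun h' => absurd h' h⟩
    choose f hf using hPM'
    set T : ℕ → Finset V := fun i => (A i).filter (fun x => f i x ∈ S) with hTdef
    have hTA : ∀ i, T i ⊆ A i := fun i => Finset.filter_subset _ _
    have hTimage : ∀ i ∈ Finset.Icc 1 k, (T i).image (f i) = S ∩ B i := by
      intro i hi
      obtain ⟨hbij, hadji⟩ := hf i hi
      apply Finset.Subset.antisymm
      · intro y hy
        obtain ⟨x, hx, rfl⟩ := Finset.mem_image.mp hy
        obtain ⟨hxA, hxS⟩ := Finset.mem_filter.mp hx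
        exact Finset.mem_inter.mpr ⟨hxS, hbij.1 hxA⟩
      · intro y hy
        obtain ⟨hyS, hyB⟩ := Finset.mem_inter.mp hy
        obtain ⟨x, hxA, rfl⟩ := hbij.2.2 hyB
        exact Finset.mem_image_of_mem _ (Finset.mem_filter.mpr ⟨hxA, hyS⟩)
    have hTcard : ∀ i ∈ Finset.Icc 1 k, (T i).card = (S ∩ B i).card := by
      intro i hi
      rw [← hTimage i hi]
      exact (Finset.card_image_of_injOn ((hf i hi).1.2.1.mono
        (by exact_mod_cast hTA i))).symm
    have hTN : ∀ i ∈ Finset.Icc 1 k, T i ⊆ N := by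
      intro i hi x hx
      obtain ⟨hxA, hxS⟩ := Finset.mem_filter.mp hx
      have hik := Finset.mem_Icc.mp hi
      exact hkey x (hAsubXS i hik.2 hxA) (f i x) hxS ((hf i hi).2 x hxA)
    -- S decomposes over the B i
    have hSdecomp : S = (Finset.Icc 1 k).biUnion (fun i => S ∩ B i) := by
      apply Finset.Subset.antisymm
      · intro y hy
        have : y ∈ (Finset.Icc 1 k).biUnion B := by rw [← hYSeq]; exact hSYS hy
        obtain ⟨i, hi, hyB⟩ := Finset.mem_biUnion.mp this
        exact Finset.mem_biUnion.mpr ⟨i, hi, Finset.mem_inter.mpr ⟨hy, hyB⟩⟩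
      · intro y hy
        obtain ⟨i, hi, hyB⟩ := Finset.mem_biUnion.mp hy
        exact (Finset.mem_inter.mp hyB).1
    have hScard : S.card = ∑ i ∈ Finset.Icc 1 k, (S ∩ B i).card := by
      conv_lhs => rw [hSdecomp]
      exact Finset.card_biUnion (fun i hi j hj hij =>
        (hBdisj i hi j hj hij).mono Finset.inter_subset_right Finset.inter_subset_right)
    have hTbiU : (Finset.Icc 1 k).biUnion T ⊆ N :=
      Finset.biUnion_subset.mpr hTN
    have hTbiUcard : ((Finset.Icc 1 k).biUnion T).card = N.card := by
      rw [Finset.card_biUnion (fun i hi j hj hij =>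
        ((hAdisj i (Finset.mem_range.mpr (by
            have := (Finset.mem_Icc.mp hi).2; omega))
          j (Finset.mem_range.mpr (by
            have := (Finset.mem_Icc.mp hj).2; omega)) hij).mono
          (hTA i) (hTA j)))]
      rw [Finset.sum_congr rfl hTcard, ← hScard, hcardS, hcardN]
    have hNeq : N = (Finset.Icc 1 k).biUnion T :=
      (Finset.eq_of_subset_of_card_le hTbiU (le_of_eq hTbiUcard.symm)).symm
    -- S is empty
    have hSempty : ¬ S.Nonempty := by
      rintro hS
      set I := (Finset.Icc 1 k).filter (fun i => (S ∩ B i).Nonempty) with hIdef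
      have hI : I.Nonempty := by
        obtain ⟨y, hy⟩ := hS
        have : y ∈ (Finset.Icc 1 k).biUnion (fun i => S ∩ B i) := by
          rw [← hSdecomp]; exact hy
        obtain ⟨i, hi, hyB⟩ := Finset.mem_biUnion.mp this
        exact ⟨i, Finset.mem_filter.mpr ⟨hi, ⟨y, hyB⟩⟩⟩
      set i := I.min' hI with hidef
      have hiI : i ∈ I := Finset.min'_mem I hI
      obtain ⟨hiIcc, ⟨y, hy⟩⟩ := Finset.mem_filter.mp hiI
      obtain ⟨hyS, hyB⟩ := Finset.mem_inter.mp hy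
      have hik := Finset.mem_Icc.mp hiIcc
      obtain ⟨x, hxA, hxadj⟩ := hPen i hiIcc y hyB
      have hxXS : x ∈ XS := hAsubXS (i - 1) (by omega) hxA
      have hxN : x ∈ N := hkey x hxXS y hyS hxadj
      rw [hNeq] at hxN
      obtain ⟨j, hj, hxT⟩ := Finset.mem_biUnion.mp hxN
      have hjk := Finset.mem_Icc.mp hj
      have hji : j = i - 1 := by
        by_contra hji
        have hd := hAdisj j (Finset.mem_range.mpr (by omega))
          (i - 1) (Finset.mem_range.mpr (by omega)) hji
        exact (Finset.disjoint_left.mp hd (hTA j hxT)) hxA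
      have hi2 : 2 ≤ i := by omega
      have hiI' : i - 1 ∈ I := by
        refine Finset.mem_filter.mpr ⟨Finset.mem_Icc.mpr (by omega), ?_⟩
        refine ⟨f (i-1) x, Finset.mem_inter.mpr ⟨?_, ?_⟩⟩
        · rw [← hji]; exact (Finset.mem_filter.mp hxT).2
        · rw [← hji]
          exact (hf j hj).1.1 (hTA j hxT)
      have := Finset.min'_le I _ hiI'
      omega
    -- hence no edge of M has its second coordinate in YS
    have hnoYS : ∀ p ∈ M, p.2 ∉ YS := by
      intro p hp hpYS
      exact hSempty ⟨p.2, Finset.mem_image_of_mem _ (Finset.mem_filter.mpr ⟨hp, hpYS⟩)⟩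
    have hfstXL : M.image Prod.fst ⊆ XL := by
      intro x hx
      obtain ⟨p, hp, rfl⟩ := Finset.mem_image.mp hx
      obtain ⟨hpX, hpY, hpadj⟩ := hM1 p hp
      have hpYL : p.2 ∈ YL := by
        have h' : p.2 ∈ YS ∪ YL := by rw [hYunion]; exact hpY
        rcases Finset.mem_union.mp h' with h | h
        · exact absurd h (hnoYS p hp)
        · exact h
      have h' : p.1 ∈ XS ∪ XL := by rw [hXunion]; exact hpX
      rcases Finset.mem_union.mp h' with h | h
      · exact absurd hpadj (ha _ h _ hpYL)
      · exact h
    calc M.card = (M.image Prod.fst).card :=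
          (Finset.card_image_of_injOn hfstinj).symm
      _ ≤ XL.card := Finset.card_le_card hfstXL
end

section
/- Let G = (X ⊔ Y, E) be a finite bipartite graph and let X = X_S ⊔ X_L, Y = Y_S ⊔ Y_L be the unique partitions satisfying: (a) there are no edges between X_S and Y_L; (b) G[X_S, Y_S] is Y-path-saturated; (c) G[X_L, Y_L] admits a matching saturating X_L. Then every maximum-cardinality matching of the subgraph G[X_L, Y_L] saturates every vertex of X_L, and is an envy-free matching in G. -/
attribute [local instance] Classical.propDecidable

variable {V : Type*}

/-- if `X = X_S ⊔ X_L` and `Y = Y_S ⊔ Y_L` are the (unique) partitions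
satisfying (a), (b), (c), then every maximum-cardinality matching of `G[X_L, Y_L]`
saturates every vertex of `X_L` and is an envy-free matching in `G`. -/
theorem max_matching_of_XL_envy_free [Fintype V] (G : SimpleGraph V) (X Y : Finset V)
    (hBip : IsBipartition G X Y)
    (XS XL YS YL : Finset V)
    (hXdisj : Disjoint XS XL) (hXunion : XS ∪ XL = X)
    (hYdisj : Disjoint YS YL) (hYunion : YS ∪ YL = Y)
    (ha : ∀ x ∈ XS, ∀ y ∈ YL, ¬ G.Adj x y)
    (hb : YPathSaturated G XS YS)
    (hc : ∃ M : Finset (V × V), IsBipMatching G XL YL M ∧ XL ⊆ M.image Prod.fst) :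
    ∀ M : Finset (V × V), IsBipMatching G XL YL M →
      (∀ M' : Finset (V × V), IsBipMatching G XL YL M' → M'.card ≤ M.card) →
      XL ⊆ M.image Prod.fst ∧ EnvyFree G X M := by
  intro M hM hmax
  obtain ⟨M₀, hM₀, hsat₀⟩ := hc
  have key : ∀ N : Finset (V × V), IsBipMatching G XL YL N →
      (N.image Prod.fst).card = N.card := by
    intro N hN
    apply Finset.card_image_of_injOn
    intro p hp q hq hpq
    by_contra hne
    exact ((hN.2 p hp q hq hne).1) hpq
  have hsub : ∀ N : Finset (V × V), IsBipMatching G XL YL N →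
      N.image Prod.fst ⊆ XL := by
    intro N hN x hx
    obtain ⟨p, hp, rfl⟩ := Finset.mem_image.mp hx
    exact (hN.1 p hp).1
  have hM₀card : M₀.card = XL.card := by
    rw [← key M₀ hM₀]
    exact le_antisymm (Finset.card_le_card (hsub M₀ hM₀))
      (Finset.card_le_card hsat₀)
  have hMcard : M.card = XL.card := by
    refine le_antisymm ?_ ?_
    · rw [← key M hM]; exact Finset.card_le_card (hsub M hM)
    · rw [← hM₀card]; exact hmax M₀ hM₀
  have himg : M.image Prod.fst = XL := by
    apply Finset.eq_of_subset_of_card_le (hsub M hM)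
    rw [key M hM, hMcard]
  constructor
  · rw [himg]
  · intro x hx hxM y hy hadj
    have hxS : x ∈ XS := by
      rw [← hXunion] at hx
      rcases Finset.mem_union.mp hx with h | h
      · exact h
      · exact absurd (himg ▸ h) hxM
    obtain ⟨p, hp, rfl⟩ := Finset.mem_image.mp hy
    exact ha x hxS p.2 (hM.1 p hp).2.1 hadj
end

section
/- Let G = (X ⊔ Y, E) be a finite bipartite graph that admits a matching saturating every vertex of X, and let W be an envy-free matching in G. Then there exists a matching in G that saturates every vertex of X and contains W as a subset. -/
attribute [local instance] Classical.propDecidable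

variable {V : Type*}

/-- in an `X`-saturated bipartite graph, every envy-free matching `W`
is contained in some `X`-saturating matching. -/
theorem envy_free_subset_saturating [Fintype V] (G : SimpleGraph V) (X Y : Finset V)
    (hBip : IsBipartition G X Y)
    (hsat : ∃ M : Finset (V × V), IsBipMatching G X Y M ∧ X ⊆ M.image Prod.fst)
    (W : Finset (V × V)) (hW : IsBipMatching G X Y W) (hEF : EnvyFree G X W) :
    ∃ M' : Finset (V × V), IsBipMatching G X Y M' ∧ X ⊆ M'.image Prod.fst ∧
      W ⊆ M' := by
  obtain ⟨M, hM, hMsat⟩ := hsat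
  classical
  refine ⟨W ∪ M.filter (fun p => p.1 ∉ W.image Prod.fst), ?_, ?_, Finset.subset_union_left⟩
  · constructor
    · intro p hp
      rcases Finset.mem_union.1 hp with h | h
      · exact hW.1 p h
      · exact hM.1 p (Finset.mem_filter.1 h).1
    · -- key fact: for any q in the filtered part, q.2 is not matched by W
      have key : ∀ q ∈ M.filter (fun p => p.1 ∉ W.image Prod.fst),
          q.2 ∉ W.image Prod.snd := by
        intro q hq hq2
        obtain ⟨hqM, hq1⟩ := Finset.mem_filter.1 hq
        obtain ⟨hqX, _, hadj⟩ := hM.1 q hqM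
        exact hEF q.1 hqX hq1 q.2 hq2 hadj
      intro p hp q hq hpq
      rcases Finset.mem_union.1 hp with hpW | hpM <;>
        rcases Finset.mem_union.1 hq with hqW | hqM
      · exact hW.2 p hpW q hqW hpq
      · constructor
        · intro h
          exact (Finset.mem_filter.1 hqM).2 (Finset.mem_image.2 ⟨p, hpW, h⟩)
        · intro h
          exact key q hqM (Finset.mem_image.2 ⟨p, hpW, h⟩)
      · constructor
        · intro h
          exact (Finset.mem_filter.1 hpM).2 (Finset.mem_image.2 ⟨q, hqW, h.symm⟩)
        · intro h
          exact key p hpM (Finset.mem_image.2 ⟨q, hqW, h.symm⟩)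
      · exact hM.2 p (Finset.mem_filter.1 hpM).1 q (Finset.mem_filter.1 hqM).1 hpq
  · intro x hx
    by_cases hxW : x ∈ W.image Prod.fst
    · obtain ⟨p, hp, hpx⟩ := Finset.mem_image.1 hxW
      exact Finset.mem_image.2 ⟨p, Finset.mem_union.2 (Or.inl hp), hpx⟩
    · obtain ⟨p, hp, hpx⟩ := Finset.mem_image.1 (hMsat hx)
      refine Finset.mem_image.2 ⟨p, Finset.mem_union.2 (Or.inr ?_), hpx⟩
      exact Finset.mem_filter.2 ⟨hp, hpx ▸ hxW⟩
end
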